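/- arXiv:0709.1642 — 5 statements merged into one kernel-verified Lean document; each statement's English description precedes it below -/
import Mathlib

section
/- The following limits hold: (a) Δ(α) → 1 as α → 0 from the right; (b) for every integer b ≥ 1, Δ(x) → (b + 2 + √(b² + 4b))/2 as x → b from the right; (c) Δ(α) − ⌈α⌉ → 1 as α → ∞. -/
open Filter

set_option maxHeartbeats 1000000 in
lemma core' (s : ℝ) (B : ℤ) (β : ℝ) (hs0 : 0 < s) (hs1 : s ≤ 1) (hB : 1 ≤ B) (hβ : 1 < β)
    (heq : ∑' n : ℕ, ((((B - 1) + (⌈s * ((n:ℝ)+1)⌉ - ⌈s * (n:ℝ)⌉)) : ℤ) : ℝ) / β ^ (n+1) = 1) :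
    β ≤ (B:ℝ) + 1 ∧ 0 ≤ β^2 - ((B:ℝ)+1)*β + 1 ∧ β^2 - (((B:ℝ)-1+s)+2)*β + 1 ≤ 0 := by
  have hβ0 : (0:ℝ) < β := by linarith
  set x : ℝ := β⁻¹ with hxdef
  have hx0 : 0 < x := by positivity
  have hx1 : x < 1 := inv_lt_one_of_one_lt₀ hβ
  have hβx : β * x = 1 := mul_inv_cancel₀ (by positivity)
  have hb : (0:ℝ) < 1 - x := by linarith
  have hnorm : ‖x‖ < 1 := by rw [Real.norm_eq_abs, abs_of_pos hx0]; exact hx1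
  have hgeo : Summable (fun n : ℕ => x ^ n) := summable_geometric_of_lt_one hx0.le hx1
  have hgeo1 : Summable (fun n : ℕ => x ^ (n+1)) := by
    simpa [pow_succ] using hgeo.mul_right x
  have hsum_geo1 : ∑' n : ℕ, x ^ (n+1) = x / (1 - x) := by
    calc ∑' n:ℕ, x^(n+1) = ∑' n:ℕ, x^n * x := by simp [pow_succ]
    _ = (∑' n:ℕ, x^n) * x := tsum_mul_right
    _ = x / (1-x) := by rw [tsum_geometric_of_lt_one hx0.le hx1, inv_mul_eq_div]
  have hn : Summable (fun n:ℕ => (n:ℝ) * x^n) := by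
    simpa using summable_pow_mul_geometric_of_norm_lt_one 1 hnorm
  have hn1 : Summable (fun n:ℕ => ((n:ℝ)+1) * x^(n+1)) := by
    have := (summable_nat_add_iff 1).2 hn
    simpa [Nat.cast_add] using this
  have hnsum : ∑' n : ℕ, ((n:ℝ)+1) * x^(n+1) = x / (1-x)^2 := by
    have h2 := Summable.tsum_eq_zero_add hn
    rw [tsum_coe_mul_geometric_of_norm_lt_one hnorm] at h2
    simp only [Nat.cast_zero, pow_zero, zero_mul, zero_add, Nat.cast_add, Nat.cast_one] at h2
    exact h2.symm
  -- the ceiling sequence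
  set f : ℕ → ℝ := fun n => ((⌈s * (n:ℝ)⌉ : ℤ) : ℝ) * x ^ n with hfdef
  have hf0 : f 0 = 0 := by simp [hfdef]
  have hfnonneg : ∀ n, 0 ≤ f n := by
    intro n
    apply mul_nonneg _ (by positivity)
    exact_mod_cast Int.ceil_nonneg (by positivity)
  have hfle : ∀ n, f n ≤ (n:ℝ) * x^n := by
    intro n
    apply mul_le_mul_of_nonneg_right _ (by positivity)
    have h1 : ⌈s * (n:ℝ)⌉ ≤ (n:ℤ) := Int.ceil_le.2 (by push_cast; nlinarith [Nat.cast_nonneg (α := ℝ) n])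
    exact_mod_cast h1
  have hf : Summable f := Summable.of_nonneg_of_le hfnonneg hfle hn
  have hf' : Summable (fun n => f (n+1)) := (summable_nat_add_iff 1).2 hf
  set F : ℝ := ∑' n, f (n+1) with hFdef
  have hFeq : ∑' n, f n = F := by rw [Summable.tsum_eq_zero_add hf, hf0, zero_add]
  have hT : ∑' n, (f (n+1) - x * f n) = (1-x) * F := by
    rw [Summable.tsum_sub hf' (hf.mul_left x), tsum_mul_left, hFeq]; ring
  -- decomposition of the terms
  have hdecomp : ∀ n:ℕ, ((((B - 1) + (⌈s * ((n:ℝ)+1)⌉ - ⌈s * (n:ℝ)⌉)) : ℤ) : ℝ) / β^(n+1)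
      = ((B:ℝ)-1)*x^(n+1) + (f (n+1) - x * f n) := by
    intro n
    simp only [hfdef]
    push_cast
    rw [div_eq_mul_inv, ← inv_pow, ← hxdef]
    ring
  have heq2 : ((B:ℝ)-1) * (x/(1-x)) + (1-x)*F = 1 := by
    have hsl : Summable (fun n:ℕ => ((B:ℝ)-1)*x^(n+1)) := hgeo1.mul_left _
    have hsr : Summable (fun n:ℕ => f (n+1) - x * f n) := hf'.sub (hf.mul_left x)
    calc ((B:ℝ)-1) * (x/(1-x)) + (1-x)*F
        = (∑' n:ℕ, ((B:ℝ)-1)*x^(n+1)) + ∑' n:ℕ, (f (n+1) - x * f n) := by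
          rw [tsum_mul_left, hsum_geo1, hT]
      _ = ∑' n:ℕ, (((B:ℝ)-1)*x^(n+1) + (f (n+1) - x * f n)) := (Summable.tsum_add hsl hsr).symm
      _ = ∑' n:ℕ, ((((B - 1) + (⌈s * ((n:ℝ)+1)⌉ - ⌈s * (n:ℝ)⌉)) : ℤ) : ℝ) / β^(n+1) := by
          exact tsum_congr fun n => (hdecomp n).symm
      _ = 1 := heq
  -- bounds on F
  have hFlb : x/(1-x) ≤ F := by
    rw [← hsum_geo1]
    apply Summable.tsum_le_tsum _ hgeo1 hf'
    intro n
    have h1 : (1:ℝ) ≤ ((⌈s * ((n+1:ℕ):ℝ)⌉ : ℤ) : ℝ) := by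
      have : (1:ℤ) ≤ ⌈s * ((n+1:ℕ):ℝ)⌉ := Int.ceil_pos.mpr (by positivity)
      exact_mod_cast this
    have : (1:ℝ) * x^(n+1) ≤ f (n+1) := mul_le_mul_of_nonneg_right h1 (by positivity)
    simpa using this
  have hFub : F ≤ s * (x/(1-x)^2) + x/(1-x) := by
    have hrs : Summable (fun n:ℕ => (s*((n:ℝ)+1)+1)*x^(n+1)) := by
      refine Summable.congr ((hn1.mul_left s).add hgeo1) fun n => by ring
    have hle : ∀ n:ℕ, f (n+1) ≤ (s*((n:ℝ)+1)+1)*x^(n+1) := by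
      intro n
      apply mul_le_mul_of_nonneg_right _ (by positivity)
      have h1 : ((⌈s * ((n+1:ℕ):ℝ)⌉ : ℤ) : ℝ) < s * ((n+1:ℕ):ℝ) + 1 := Int.ceil_lt_add_one _
      push_cast at h1 ⊢
      linarith
    calc F ≤ ∑' n:ℕ, (s*((n:ℝ)+1)+1)*x^(n+1) := Summable.tsum_le_tsum hle hf' hrs
      _ = s * (∑' n:ℕ, ((n:ℝ)+1)*x^(n+1)) + ∑' n:ℕ, x^(n+1) := by
          rw [← tsum_mul_left, ← Summable.tsum_add (hn1.mul_left s) hgeo1]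
          exact tsum_congr fun n => by ring
      _ = s * (x/(1-x)^2) + x/(1-x) := by rw [hnsum, hsum_geo1]
  have hFub2 : F ≤ x/(1-x)^2 := by
    rw [← hnsum]
    apply Summable.tsum_le_tsum _ hf' hn1
    intro n
    have := hfle (n+1)
    push_cast at this ⊢
    nlinarith [pow_nonneg hx0.le (n+1)]
  -- clear denominators
  have e1 : ((B:ℝ)-1)*x + (1-x)^2*F = 1-x := by
    have := heq2
    field_simp at this
    nlinarith [this]
  have hFlb' : x*(1-x) ≤ (1-x)^2*F := by
    have := mul_le_mul_of_nonneg_left hFlb (le_of_lt (mul_pos hb hb))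
    calc x*(1-x) = (1-x)*(1-x)*(x/(1-x)) := by field_simp
    _ ≤ (1-x)*(1-x)*F := this
    _ = (1-x)^2*F := by ring
  have hFub' : (1-x)^2*F ≤ s*x + x*(1-x) := by
    have := mul_le_mul_of_nonneg_left hFub (le_of_lt (mul_pos hb hb))
    calc (1-x)^2*F = (1-x)*(1-x)*F := by ring
    _ ≤ (1-x)*(1-x)*(s * (x/(1-x)^2) + x/(1-x)) := this
    _ = s*x + x*(1-x) := by field_simp
  have hFub2' : (1-x)^2*F ≤ x := by
    have := mul_le_mul_of_nonneg_left hFub2 (le_of_lt (mul_pos hb hb))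
    calc (1-x)^2*F = (1-x)*(1-x)*F := by ring
    _ ≤ (1-x)*(1-x)*(x/(1-x)^2) := this
    _ = x := by field_simp
  -- derive the inequalities in x, then in β
  have hx2 : β^2 * x = β := by
    calc β^2*x = β*(β*x) := by ring
    _ = β := by rw [hβx, mul_one]
  have hx3 : β^2 * x^2 = 1 := by
    calc β^2*x^2 = (β*x)^2 := by ring
    _ = 1 := by rw [hβx]; norm_num
  refine ⟨?_, ?_, ?_⟩
  · -- β ≤ B + 1
    have h1 : 1 - x ≤ (B:ℝ)*x := by nlinarith [e1, hFub2']
    nlinarith [mul_le_mul_of_nonneg_left h1 hβ0.le, hβx]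
  · -- 0 ≤ β² - (B+1)β + 1
    have h2 : 1 - x ≥ ((B:ℝ)-1)*x + x*(1-x) := by nlinarith [e1, hFlb']
    nlinarith [mul_le_mul_of_nonneg_left h2 (sq_nonneg β), hx2, hx3]
  · -- β² - (B+1+s)β + 1 ≤ 0
    have h3 : 1 - x ≤ ((B:ℝ)-1)*x + s*x + x*(1-x) := by nlinarith [e1, hFub']
    nlinarith [mul_le_mul_of_nonneg_left h3 (sq_nonneg β), hx2, hx3]

lemma le_root (t β : ℝ) (ht : 2 ≤ t) (h : β^2 - t*β + 1 ≤ 0) :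
    β ≤ (t + Real.sqrt (t^2-4))/2 := by
  have h4 : 0 ≤ t^2 - 4 := by nlinarith
  have hr := Real.sq_sqrt h4
  have hr0 := Real.sqrt_nonneg (t^2-4)
  by_contra hc
  push_neg at hc
  have h1 : 0 < β - (t + Real.sqrt (t^2-4))/2 := by linarith
  have h2 : 0 < β - (t - Real.sqrt (t^2-4))/2 := by linarith
  nlinarith [mul_pos h1 h2, hr]

lemma ge_root (t β : ℝ) (ht : 2 ≤ t) (hβ : 1 < β) (h : 0 ≤ β^2 - t*β + 1) :
    (t + Real.sqrt (t^2-4))/2 ≤ β := by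
  have h4 : 0 ≤ t^2 - 4 := by nlinarith
  have hr := Real.sq_sqrt h4
  have hr0 := Real.sqrt_nonneg (t^2-4)
  have hkey : t - 2 ≤ Real.sqrt (t^2-4) := by
    by_contra hc
    push_neg at hc
    nlinarith [mul_lt_mul'' hc hc hr0 hr0]
  by_contra hc
  push_neg at hc
  have h1 : β - (t + Real.sqrt (t^2-4))/2 < 0 := by linarith
  have h2 : 0 < β - (t - Real.sqrt (t^2-4))/2 := by linarith
  nlinarith [mul_neg_of_neg_of_pos h1 h2, hr]

lemma lower_lin (B β : ℝ) (hB : 1 ≤ B) (hβ : 1 < β) (h : 0 ≤ β^2 - (B+1)*β + 1) :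
    B ≤ β ∧ B + 1 - 1/β ≤ β := by
  have hβ0 : (0:ℝ) < β := by linarith
  have hBβ : B ≤ β := by
    by_contra hc
    push_neg at hc
    nlinarith [mul_pos (sub_pos.2 hc) (sub_pos.2 hβ)]
  refine ⟨hBβ, ?_⟩
  have h1 : 1/β * β = 1 := by field_simp
  by_contra hc
  push_neg at hc
  nlinarith [mul_lt_mul_of_pos_right hc hβ0]


/-- The digit sequence `u_α`: with `b = ⌈α⌉`, `u_α n = (b−1) + ⌈(α−b+1)(n+1)⌉ − ⌈(α−b+1)n⌉`,
the upper mechanical word of slope `α − b + 1` written over the alphabet `{b−1, b}`. -/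
noncomputable def upperWord (α : ℝ) (n : ℕ) : ℤ :=
  (⌈α⌉ - 1) + (⌈(α - ⌈α⌉ + 1) * ((n : ℝ) + 1)⌉ - ⌈(α - ⌈α⌉ + 1) * (n : ℝ)⌉)

/-- `Δ` is the devil's staircase function: `Δ 0 = 1` and, for each `α > 0`, `Δ α` is the
unique real `β > 1` satisfying `∑_{n=0}^∞ u_α(n)·β^{−(n+1)} = 1`. -/
def IsDevilStaircase (Δ : ℝ → ℝ) : Prop :=
  Δ 0 = 1 ∧ ∀ α : ℝ, 0 < α →
    (1 < Δ α ∧ ∑' n : ℕ, (upperWord α n : ℝ) / (Δ α) ^ (n + 1) = 1) ∧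
    ∀ β : ℝ, 1 < β → (∑' n : ℕ, (upperWord α n : ℝ) / β ^ (n + 1) = 1) → β = Δ α

lemma core (α β : ℝ) (hα : 0 < α) (hβ : 1 < β)
    (heq : ∑' n : ℕ, (upperWord α n : ℝ) / β ^ (n + 1) = 1) :
    β ≤ (⌈α⌉:ℝ) + 1 ∧ 0 ≤ β^2 - ((⌈α⌉:ℝ)+1)*β + 1 ∧ β^2 - (α+2)*β + 1 ≤ 0 := by
  have hs0 : 0 < α - (⌈α⌉:ℝ) + 1 := by linarith [Int.ceil_lt_add_one α]
  have hs1 : α - (⌈α⌉:ℝ) + 1 ≤ 1 := by linarith [Int.le_ceil α]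
  have hB : 1 ≤ ⌈α⌉ := by have := Int.ceil_pos.mpr hα; omega
  have h := core' (α - (⌈α⌉:ℝ) + 1) ⌈α⌉ β hs0 hs1 hB hβ (by
    simp only [upperWord] at heq; exact heq)
  refine ⟨h.1, h.2.1, ?_⟩
  have h3 := h.2.2
  have harg : ((⌈α⌉:ℝ)-1+(α - (⌈α⌉:ℝ)+1))+2 = α+2 := by ring
  rwa [harg] at h3


/-- Limit values of the devil's staircase: (a) `Δ(α) → 1` as `α → 0⁺`;
(b) for every integer `b ≥ 1`, `Δ(x) → (b + 2 + √(b² + 4b))/2` as `x → b⁺`;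
(c) `Δ(α) − ⌈α⌉ → 1` as `α → ∞`. -/
theorem devilStaircase_limits (Δ : ℝ → ℝ) (hΔ : IsDevilStaircase Δ) :
    Tendsto Δ (nhdsWithin 0 (Set.Ioi (0 : ℝ))) (nhds 1) ∧
    (∀ b : ℤ, 1 ≤ b →
      Tendsto Δ (nhdsWithin (b : ℝ) (Set.Ioi (b : ℝ)))
        (nhds (((b : ℝ) + 2 + Real.sqrt ((b : ℝ) ^ 2 + 4 * (b : ℝ))) / 2))) ∧
    Tendsto (fun α : ℝ => Δ α - (⌈α⌉ : ℝ)) atTop (nhds 1) := by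
  obtain ⟨hΔ0, hmain⟩ := hΔ
  have hgt1 : ∀ α : ℝ, 0 < α → 1 < Δ α := fun α hα => (hmain α hα).1.1
  have key : ∀ α : ℝ, 0 < α → Δ α ≤ (⌈α⌉:ℝ) + 1 ∧
      0 ≤ (Δ α)^2 - ((⌈α⌉:ℝ)+1)*(Δ α) + 1 ∧ (Δ α)^2 - (α+2)*(Δ α) + 1 ≤ 0 :=
    fun α hα => core α (Δ α) hα (hmain α hα).1.1 (hmain α hα).1.2
  have hcont : Continuous fun x : ℝ => (x + 2 + Real.sqrt ((x+2)^2-4))/2 := by fun_prop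
  refine ⟨?_, ?_, ?_⟩
  · -- (a)
    have hupper : ∀ᶠ α in nhdsWithin 0 (Set.Ioi (0:ℝ)),
        Δ α ≤ (α + 2 + Real.sqrt ((α+2)^2-4))/2 := by
      filter_upwards [self_mem_nhdsWithin] with α hα
      have hα0 : (0:ℝ) < α := hα
      exact le_root (α+2) (Δ α) (by linarith) (key α hα0).2.2
    have hlower : ∀ᶠ α in nhdsWithin 0 (Set.Ioi (0:ℝ)), (1:ℝ) ≤ Δ α := by
      filter_upwards [self_mem_nhdsWithin] with α hα
      exact (hgt1 α hα).le
    refine tendsto_of_tendsto_of_tendsto_of_le_of_le' tendsto_const_nhds ?_ hlower hupper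
    have h := (hcont.tendsto 0).mono_left (nhdsWithin_le_nhds (s := Set.Ioi (0:ℝ)))
    have h0 : ((0:ℝ) + 2 + Real.sqrt (((0:ℝ)+2)^2-4))/2 = 1 := by norm_num
    rwa [h0] at h
  · -- (b)
    intro b hb
    have hb1 : (1:ℝ) ≤ (b:ℝ) := by exact_mod_cast hb
    have hmem : Set.Ioo (b:ℝ) ((b:ℝ)+1) ∈ nhdsWithin (b:ℝ) (Set.Ioi (b:ℝ)) :=
      Ioo_mem_nhdsGT (by linarith)
    have hlower : ∀ᶠ x in nhdsWithin (b:ℝ) (Set.Ioi (b:ℝ)),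
        ((b:ℝ) + 2 + Real.sqrt ((b:ℝ)^2 + 4*(b:ℝ)))/2 ≤ Δ x := by
      filter_upwards [hmem] with x hx
      have hx0 : 0 < x := by have := hx.1; linarith
      have hceil : ⌈x⌉ = b + 1 := by
        rw [Int.ceil_eq_iff]
        constructor
        · push_cast; linarith [hx.1]
        · push_cast; linarith [hx.2]
      have hk := (key x hx0).2.1
      rw [hceil] at hk
      push_cast at hk
      have hk' : 0 ≤ (Δ x)^2 - ((b:ℝ)+2)*(Δ x) + 1 := by linarith
      have h := ge_root ((b:ℝ)+2) (Δ x) (by linarith) (hgt1 x hx0) hk'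
      rwa [show ((b:ℝ)+2)^2-4 = (b:ℝ)^2+4*(b:ℝ) from by ring] at h
    have hupper : ∀ᶠ x in nhdsWithin (b:ℝ) (Set.Ioi (b:ℝ)),
        Δ x ≤ (x + 2 + Real.sqrt ((x+2)^2-4))/2 := by
      filter_upwards [hmem] with x hx
      have hx0 : 0 < x := by have := hx.1; linarith
      exact le_root _ _ (by have := hx.1; linarith) (key x hx0).2.2
    refine tendsto_of_tendsto_of_tendsto_of_le_of_le' tendsto_const_nhds ?_ hlower hupper
    have h := (hcont.tendsto (b:ℝ)).mono_left (nhdsWithin_le_nhds (s := Set.Ioi ((b:ℝ))))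
    rwa [show ((b:ℝ)+2)^2-4 = (b:ℝ)^2+4*(b:ℝ) from by ring] at h
  · -- (c)
    have hupper : ∀ᶠ α in atTop, Δ α - (⌈α⌉:ℝ) ≤ 1 := by
      filter_upwards [eventually_gt_atTop (0:ℝ)] with α hα
      linarith [(key α hα).1]
    have hlower : ∀ᶠ α in atTop, 1 - 1/α ≤ Δ α - (⌈α⌉:ℝ) := by
      filter_upwards [eventually_ge_atTop (1:ℝ)] with α hα
      have hα0 : (0:ℝ) < α := by linarith
      have hBα : α ≤ (⌈α⌉:ℝ) := Int.le_ceil α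
      obtain ⟨h1, h2⟩ := lower_lin ((⌈α⌉:ℝ)) (Δ α) (by linarith) (hgt1 α hα0) (key α hα0).2.1
      have h3 : 1/(Δ α) ≤ 1/α := one_div_le_one_div_of_le hα0 (by linarith)
      linarith
    refine tendsto_of_tendsto_of_tendsto_of_le_of_le' ?_ tendsto_const_nhds hlower hupper
    have hinv : Tendsto (fun α : ℝ => 1/α) atTop (nhds 0) := by
      simp only [one_div]; exact tendsto_inv_atTop_zero
    have h : Tendsto (fun α : ℝ => 1 - 1/α) atTop (nhds (1 - 0)) :=
      tendsto_const_nhds.sub hinv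
    simpa using h
end

section
/- (Δ(α) − 1)/α → ∞ as α → 0 from the right; in particular Δ has no finite right derivative at 0. -/
open Filter

/-- `(Δ(α) − 1)/α → ∞` as `α → 0⁺`; in particular `Δ` has no finite right derivative at 0. -/
theorem devilStaircase_right_derivative_at_zero (Δ : ℝ → ℝ) (hΔ : IsDevilStaircase Δ) :
    Tendsto (fun α : ℝ => (Δ α - 1) / α) (nhdsWithin 0 (Set.Ioi (0 : ℝ))) atTop := by
  rw [tendsto_atTop]
  intro M
  set M' : ℝ := max M 1 with hM'def
  have hM1 : (1:ℝ) ≤ M' := le_max_right _ _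
  have hM'pos : (0:ℝ) < M' := lt_of_lt_of_le one_pos hM1
  set δ : ℝ := min (1/2) (Real.exp (-(2*M')) / (2*M')) with hδdef
  have hδpos : 0 < δ := lt_min (by norm_num) (div_pos (Real.exp_pos _) (by linarith))
  have hmem : Set.Ioo (0:ℝ) δ ∈ nhdsWithin 0 (Set.Ioi 0) :=
    Ioo_mem_nhdsGT hδpos
  filter_upwards [hmem] with α hα
  obtain ⟨hα0, hαδ⟩ := hα
  have hαhalf : α < 1/2 := lt_of_lt_of_le hαδ (min_le_left _ _)
  by_contra hcon
  push_neg at hcon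
  have hεM : Δ α - 1 < M' * α := by
    have h1 : (Δ α - 1)/α < M' := lt_of_lt_of_le hcon (le_max_left M 1)
    have := (div_lt_iff₀ hα0).mp h1
    linarith
  -- basic facts on Δ α
  obtain ⟨⟨hβ1, hsum⟩, -⟩ := hΔ.2 α hα0
  have hβ0 : (0:ℝ) < Δ α := lt_trans one_pos hβ1
  -- ⌈α⌉ = 1
  have hceil : ⌈α⌉ = (1:ℤ) := by
    rw [Int.ceil_eq_iff]
    constructor <;> push_cast <;> linarith
  have hslope : α - (⌈α⌉ : ℝ) + 1 = α := by rw [hceil]; push_cast; ring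
  have huw : ∀ n : ℕ, upperWord α n = ⌈α * ((n:ℝ)+1)⌉ - ⌈α * (n:ℝ)⌉ := by
    intro n
    rw [upperWord, hslope, hceil]
    ring
  -- nonnegativity and bound of digits
  have hnn : ∀ n : ℕ, (0:ℤ) ≤ upperWord α n := by
    intro n
    rw [huw n]
    have : α * (n:ℝ) ≤ α * ((n:ℝ)+1) := by nlinarith
    have := Int.ceil_le_ceil this
    omega
  have hle1 : ∀ n : ℕ, upperWord α n ≤ 1 := by
    intro n
    rw [huw n]
    have h1 : α * ((n:ℝ)+1) ≤ α * (n:ℝ) + 1 := by nlinarith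
    have h2 : ⌈α * ((n:ℝ)+1)⌉ ≤ ⌈α * (n:ℝ) + 1⌉ := Int.ceil_le_ceil h1
    rw [Int.ceil_add_one] at h2
    omega
  -- summability
  have hfnn : ∀ n : ℕ, (0:ℝ) ≤ (upperWord α n : ℝ) / (Δ α) ^ (n + 1) := by
    intro n
    apply div_nonneg _ (le_of_lt (pow_pos hβ0 _))
    exact_mod_cast hnn n
  have hgeom : Summable (fun n : ℕ => (1 / Δ α) ^ n) := by
    apply summable_geometric_of_lt_one
    · positivity
    · rw [div_lt_one hβ0]; exact hβ1
  have hsummable : Summable (fun n : ℕ => (upperWord α n : ℝ) / (Δ α) ^ (n + 1)) := by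
    refine Summable.of_nonneg_of_le hfnn (fun n => ?_) hgeom
    have hbd : (upperWord α n : ℝ) ≤ 1 := by exact_mod_cast hle1 n
    calc (upperWord α n : ℝ) / (Δ α) ^ (n + 1) ≤ 1 / (Δ α) ^ (n+1) := by
          gcongr
      _ ≤ 1 / (Δ α) ^ n := by
          gcongr
          · exact le_of_lt hβ1
          · exact Nat.le_succ n
      _ = (1 / Δ α) ^ n := by rw [div_pow, one_pow]
  -- the special index n₁
  set n₁ : ℕ := ⌊1/α⌋₊ with hn₁def
  have h1α2 : (2:ℝ) ≤ 1/α := by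
    rw [le_div_iff₀ hα0]; linarith
  have hn₁2 : 2 ≤ n₁ := Nat.le_floor h1α2
  have hn₁ne : (0:ℕ) ≠ n₁ := by omega
  have hαn₁le : α * (n₁:ℝ) ≤ 1 := by
    have h := Nat.floor_le (le_of_lt (div_pos one_pos hα0))
    calc α * (n₁:ℝ) ≤ α * (1/α) := by nlinarith
      _ = 1 := by field_simp
  have hαn₁gt : 1 < α * ((n₁:ℝ)+1) := by
    have h : 1/α < (n₁:ℝ) + 1 := Nat.lt_floor_add_one (1/α)
    calc (1:ℝ) = α * (1/α) := by field_simp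
      _ < α * ((n₁:ℝ)+1) := by nlinarith
  have hun₁ : (1:ℤ) ≤ upperWord α n₁ := by
    rw [huw n₁]
    have h1 : ⌈α * (n₁:ℝ)⌉ ≤ 1 := Int.ceil_le.mpr (by exact_mod_cast hαn₁le)
    have h2 : (1:ℤ) < ⌈α * ((n₁:ℝ)+1)⌉ := by
      rw [Int.lt_ceil]; exact_mod_cast hαn₁gt
    omega
  have hu0 : upperWord α 0 = 1 := by
    rw [huw 0]
    norm_num
    exact hceil
  -- lower bound on the sum by two terms
  have hpair : (upperWord α 0 : ℝ) / (Δ α) ^ (0 + 1) + (upperWord α n₁ : ℝ) / (Δ α) ^ (n₁ + 1) ≤ 1 := by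
    have hsle := Summable.sum_le_tsum ({0, n₁} : Finset ℕ) (fun n _ => hfnn n) hsummable
    rw [hsum, Finset.sum_pair hn₁ne] at hsle
    exact hsle
  have hterm0 : (upperWord α 0 : ℝ) / (Δ α) ^ (0 + 1) = 1 / Δ α := by
    rw [hu0]; norm_num
  have hterm1 : 1 / (Δ α) ^ (n₁ + 1) ≤ (upperWord α n₁ : ℝ) / (Δ α) ^ (n₁ + 1) := by
    gcongr
    exact_mod_cast hun₁
  have hkey : 1 / Δ α + 1 / (Δ α) ^ (n₁ + 1) ≤ 1 := by
    rw [hterm0] at hpair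
    linarith
  -- deduce 1/β^(n₁+1) ≤ β - 1
  have hstep : 1 / (Δ α) ^ (n₁ + 1) ≤ Δ α - 1 := by
    have h2 : 2 - Δ α ≤ 1 / Δ α := by
      rw [le_div_iff₀ hβ0]
      nlinarith [sq_nonneg (Δ α - 1)]
    linarith
  have hmul : (1:ℝ) ≤ (Δ α - 1) * (Δ α) ^ (n₁ + 1) :=
    (div_le_iff₀ (pow_pos hβ0 _)).mp hstep
  -- bound β^(n₁+1) by exp(2M')
  have hβle : Δ α ≤ Real.exp (M' * α) := by
    have hexp := Real.add_one_le_exp (M' * α)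
    linarith
  have hαn₁1 : α * ((n₁:ℝ) + 1) ≤ 2 := by nlinarith
  have hpowle : (Δ α) ^ (n₁ + 1) ≤ Real.exp (2 * M') := by
    calc (Δ α) ^ (n₁ + 1) ≤ (Real.exp (M' * α)) ^ (n₁ + 1) := by
          gcongr
      _ = Real.exp (((n₁ + 1 : ℕ) : ℝ) * (M' * α)) := (Real.exp_nat_mul _ _).symm
      _ ≤ Real.exp (2 * M') := by
          apply Real.exp_le_exp.mpr
          have hh := mul_le_mul_of_nonneg_left hαn₁1 hM'pos.le
          push_cast
          linarith [hh]
  -- contradiction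
  have hε0 : 0 < Δ α - 1 := by linarith
  have hεlow : Real.exp (-(2*M')) ≤ Δ α - 1 := by
    have hprod : Real.exp (2*M') * Real.exp (-(2*M')) = 1 := by
      rw [← Real.exp_add]; norm_num
    have h1 : (1:ℝ) ≤ (Δ α - 1) * Real.exp (2*M') := by
      calc (1:ℝ) ≤ (Δ α - 1) * (Δ α) ^ (n₁ + 1) := hmul
        _ ≤ (Δ α - 1) * Real.exp (2*M') :=
            mul_le_mul_of_nonneg_left hpowle hε0.le
    have h2 := mul_le_mul_of_nonneg_right h1 (Real.exp_pos (-(2*M'))).le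
    calc Real.exp (-(2*M')) = 1 * Real.exp (-(2*M')) := (one_mul _).symm
      _ ≤ ((Δ α - 1) * Real.exp (2*M')) * Real.exp (-(2*M')) := h2
      _ = (Δ α - 1) * (Real.exp (2*M') * Real.exp (-(2*M'))) := by ring
      _ = Δ α - 1 := by rw [hprod, mul_one]
  have hεhigh : Δ α - 1 < Real.exp (-(2*M')) / 2 := by
    have hδ2 : δ ≤ Real.exp (-(2*M')) / (2*M') := min_le_right _ _
    have hlt : M' * α < M' * (Real.exp (-(2*M')) / (2*M')) := by
      apply mul_lt_mul_of_pos_left _ hM'pos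
      linarith
    have heq : M' * (Real.exp (-(2*M')) / (2*M')) = Real.exp (-(2*M')) / 2 := by
      field_simp
    linarith [hεM]
  linarith [Real.exp_pos (-(2*M'))]
end

section
/- Let α₀ > 0 be rational. Then: (a) the left difference quotient of Δ at α₀ tends to zero, i.e., (Δ(α₀) − Δ(α))/(α₀ − α) → 0 as α → α₀ from the left; (b) if β₊ denotes the right limit of Δ at α₀ (i.e., Δ(x) → β₊ as x → α₀ from the right), then (Δ(α) − β₊)/(α − α₀) → 0 as α → α₀ from the right. -/
open Filter

lemma ceilL (q : ℕ) (hq : 0 < q) (t y : ℝ) (m : ℤ) (hm : (m:ℝ) = q * t)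
    (h1 : y ≤ t) (h2 : t - y < 1/q) : ⌈y⌉ = ⌈t⌉ := by
  have hq' : (0:ℝ) < q := by exact_mod_cast hq
  have hub : ⌈y⌉ ≤ ⌈t⌉ := Int.ceil_le_ceil h1
  have key : (q:ℤ) * ⌈t⌉ - q ≤ m - 1 := by
    have : (q:ℝ) * (⌈t⌉ - 1) < q * t := by
      have := Int.ceil_lt_add_one t
      nlinarith [Int.ceil_lt_add_one t]
    have : ((q * ⌈t⌉ - q : ℤ) : ℝ) < (m:ℝ) := by push_cast; linarith
    have := Int.cast_lt.mp this
    omega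
  have hlb : (⌈t⌉ - 1 : ℝ) ≤ t - 1/q := by
    have h3 : ((q * ⌈t⌉ - q : ℤ) : ℝ) ≤ (m:ℝ) - 1 := by exact_mod_cast key
    push_cast at h3
    rw [hm] at h3
    rw [sub_le_sub_iff]
    have h4 : (1:ℝ)/q * q = 1 := by field_simp
    nlinarith
  have : (⌈t⌉ - 1 : ℝ) < y := lt_of_le_of_lt hlb (by linarith)
  have : (⌈t⌉ - 1 : ℤ) < ⌈y⌉ := by
    rw [Int.lt_ceil]; push_cast; linarith
  omega

lemma ceilR (q : ℕ) (hq : 0 < q) (t y : ℝ) (m : ℤ) (hm : (m:ℝ) = q * t)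
    (h1 : t < y) (h2 : y < t + 1/q) : ⌈y⌉ = ⌊t⌋ + 1 := by
  have hq' : (0:ℝ) < q := by exact_mod_cast hq
  have hlb : (⌊t⌋ : ℤ) < ⌈y⌉ := by
    rw [Int.lt_ceil]
    exact lt_of_le_of_lt (Int.floor_le t) h1
  have key : m - q + 1 ≤ (q:ℤ) * ⌊t⌋ := by
    have : (q:ℝ) * (t - 1) < q * ⌊t⌋ := by
      nlinarith [Int.sub_one_lt_floor t]
    have : (m:ℝ) - q < ((q * ⌊t⌋ : ℤ) : ℝ) := by push_cast; linarith
    have := Int.cast_lt.mp (show ((m - q : ℤ):ℝ) < ((q * ⌊t⌋ : ℤ) : ℝ) by push_cast; linarith)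
    omega
  have hub : ⌈y⌉ ≤ ⌊t⌋ + 1 := by
    apply Int.ceil_le.mpr
    have : t + 1/q ≤ (⌊t⌋ : ℝ) + 1 := by
      have h3 : ((m - q + 1 : ℤ):ℝ) ≤ ((q * ⌊t⌋ : ℤ):ℝ) := by exact_mod_cast key
      push_cast at h3
      rw [hm] at h3
      have h4 : (1:ℝ)/q * q = 1 := by field_simp
      nlinarith
    push_cast
    linarith
  omega

section Word

variable {α : ℝ}

lemma slope_pos (hα : 0 < α) : 0 < α - ⌈α⌉ + 1 := by
  have := Int.ceil_lt_add_one α; linarith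

lemma slope_le_one : α - ⌈α⌉ + 1 ≤ 1 := by
  have := Int.le_ceil α; linarith

lemma ceil_slope_mul_mono (hα : 0 < α) {m k : ℕ} (h : m ≤ k) :
    ⌈(α - ⌈α⌉ + 1) * (m:ℝ)⌉ ≤ ⌈(α - ⌈α⌉ + 1) * (k:ℝ)⌉ := by
  apply Int.ceil_le_ceil
  have := slope_pos hα
  have : (m:ℝ) ≤ k := by exact_mod_cast h
  nlinarith

lemma upperWord_nonneg (hα : 0 < α) (n : ℕ) : ⌈α⌉ - 1 ≤ upperWord α n := by
  have h := ceil_slope_mul_mono hα (Nat.le_succ n)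
  unfold upperWord
  push_cast at h ⊢
  omega

lemma upperWord_le (hα : 0 < α) (n : ℕ) : upperWord α n ≤ ⌈α⌉ := by
  have h : ⌈(α - ⌈α⌉ + 1) * ((n:ℝ)+1)⌉ ≤ ⌈(α - ⌈α⌉ + 1) * (n:ℝ)⌉ + 1 := by
    rw [show ⌈(α - ⌈α⌉ + 1) * (n:ℝ)⌉ + 1 = ⌈(α - ⌈α⌉ + 1) * (n:ℝ) + 1⌉ by
      rw [Int.ceil_add_one]]
    apply Int.ceil_le_ceil
    have := slope_le_one (α := α)
    nlinarith [slope_pos hα]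
  unfold upperWord
  omega

lemma one_le_ceil_of_pos (hα : 0 < α) : 1 ≤ ⌈α⌉ := by
  exact_mod_cast Int.le_ceil_iff.mpr (by push_cast; linarith)

lemma upperWord_zero (hα : 0 < α) : upperWord α 0 = ⌈α⌉ := by
  unfold upperWord
  have h1 : ⌈(α - ⌈α⌉ + 1) * (((0:ℕ):ℝ)+1)⌉ = 1 := by
    rw [Nat.cast_zero, zero_add, mul_one]
    exact Int.ceil_eq_iff.mpr ⟨by push_cast; linarith [slope_pos hα], by push_cast; linarith [slope_le_one (α := α)]⟩
  have h2 : ⌈(α - ⌈α⌉ + 1) * ((0:ℕ):ℝ)⌉ = 0 := by norm_num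
  rw [h1, h2]
  ring

lemma upperWord_sum (α : ℝ) (K : ℕ) :
    ∑ n ∈ Finset.range K, upperWord α n = (⌈α⌉ - 1) * K + ⌈(α - ⌈α⌉ + 1) * (K:ℝ)⌉ := by
  induction K with
  | zero => simp
  | succ k ih =>
      rw [Finset.sum_range_succ, ih]
      unfold upperWord
      push_cast
      ring

end Word

section Roots

lemma summable_digits (u : ℕ → ℤ) (M : ℝ) (hM : ∀ n, |(u n:ℝ)| ≤ M) {β : ℝ} (hβ : 1 < β) :
    Summable (fun n => (u n : ℝ)/β^(n+1)) := by
  have hβ0 : (0:ℝ) < β := lt_trans one_pos hβ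
  have hr0 : (0:ℝ) ≤ 1/β := by positivity
  have hr1 : 1/β < 1 := by rw [div_lt_one hβ0]; exact hβ
  apply Summable.of_norm_bounded (g := fun n => (M * (1/β)) * (1/β)^n)
    (((summable_geometric_of_lt_one hr0 hr1).mul_left _))
  intro n
  have hpow : (0:ℝ) < β^(n+1) := by positivity
  have : ‖(u n : ℝ)/β^(n+1)‖ = |(u n : ℝ)| / β^(n+1) := by
    rw [Real.norm_eq_abs, abs_div, abs_of_pos hpow]
  rw [this]
  have h2 : M * (1/β) * (1/β)^n = M / β^(n+1) := by
    rw [mul_assoc, ← pow_succ', one_div_pow, mul_one_div]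
  rw [h2]
  gcongr
  exact hM n

lemma tsum_inv_pow_succ {β : ℝ} (hβ : 1 < β) : ∑' n:ℕ, (1/β)^(n+1) = 1/(β-1) := by
  have hβ0 : (0:ℝ) < β := lt_trans one_pos hβ
  have hr0 : (0:ℝ) ≤ 1/β := by positivity
  have hr1 : 1/β < 1 := by rw [div_lt_one hβ0]; exact hβ
  have : ∀ n:ℕ, (1/β)^(n+1) = (1/β)^n * (1/β) := fun n => pow_succ _ _
  rw [tsum_congr this, tsum_mul_right, tsum_geometric_of_lt_one hr0 hr1]
  rw [one_div, one_div, ← mul_inv, inv_eq_iff_eq_inv, inv_inv]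
  field_simp

end Roots

lemma abs_upperWord_le {α : ℝ} (hα : 0 < α) (n : ℕ) : |(upperWord α n : ℝ)| ≤ (⌈α⌉ : ℝ) := by
  have h1 := upperWord_nonneg hα n
  have h2 := upperWord_le hα n
  have h3 := one_le_ceil_of_pos hα
  rw [abs_of_nonneg (by exact_mod_cast (by omega : (0:ℤ) ≤ upperWord α n))]
  exact_mod_cast h2

lemma root_upper {α β : ℝ} (hα : 0 < α) (hβ : 1 < β)
    (hsum : ∑' n : ℕ, (upperWord α n : ℝ) / β ^ (n + 1) = 1) : β ≤ (⌈α⌉ : ℝ) + 1 := by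
  have hβ0 : (0:ℝ) < β := lt_trans one_pos hβ
  have hs1 : Summable (fun n => (upperWord α n : ℝ)/β^(n+1)) :=
    summable_digits _ _ (abs_upperWord_le hα) hβ
  have hs2 : Summable (fun n:ℕ => (⌈α⌉:ℝ) * (1/β)^(n+1)) := by
    apply Summable.mul_left
    have hr0 : (0:ℝ) ≤ 1/β := by positivity
    have hr1 : 1/β < 1 := by rw [div_lt_one hβ0]; exact hβ
    exact (summable_geometric_of_lt_one hr0 hr1).comp_injective (add_left_injective 1)
  have hle : ∑' n : ℕ, (upperWord α n : ℝ) / β ^ (n + 1) ≤ ∑' n:ℕ, (⌈α⌉:ℝ) * (1/β)^(n+1) := by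
    apply Summable.tsum_le_tsum _ hs1 hs2
    intro n
    rw [one_div_pow, mul_one_div]
    apply div_le_div_of_nonneg_right _ (by positivity)
    exact_mod_cast upperWord_le hα n
  rw [hsum, tsum_mul_left, tsum_inv_pow_succ hβ] at hle
  have h3 : (1:ℝ) ≤ (⌈α⌉:ℝ) := by exact_mod_cast one_le_ceil_of_pos hα
  rw [mul_one_div, le_div_iff₀ (by linarith)] at hle
  linarith

lemma root_pow_ge {α β : ℝ} (hα : 0 < α) (hβ : 1 < β)
    (hsum : ∑' n : ℕ, (upperWord α n : ℝ) / β ^ (n + 1) = 1) (K : ℕ) : α * K ≤ β ^ K := by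
  have hβ0 : (0:ℝ) < β := lt_trans one_pos hβ
  have hs1 : Summable (fun n => (upperWord α n : ℝ)/β^(n+1)) :=
    summable_digits _ _ (abs_upperWord_le hα) hβ
  have hnn : ∀ n, (0:ℝ) ≤ (upperWord α n : ℝ)/β^(n+1) := by
    intro n
    apply div_nonneg _ (by positivity)
    have := upperWord_nonneg hα n
    have := one_le_ceil_of_pos hα
    exact_mod_cast (by omega : (0:ℤ) ≤ upperWord α n)
  have hpart : ∑ n ∈ Finset.range K, (upperWord α n : ℝ)/β^(n+1) ≤ 1 := by
    rw [← hsum]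
    exact Summable.sum_le_tsum _ (fun n _ => hnn n) hs1
  have hterm : ∀ n ∈ Finset.range K, (upperWord α n : ℝ)/β^K ≤ (upperWord α n : ℝ)/β^(n+1) := by
    intro n hn
    rw [Finset.mem_range] at hn
    have h1 : (0:ℝ) ≤ (upperWord α n : ℝ) := by
      have := upperWord_nonneg hα n
      have := one_le_ceil_of_pos hα
      exact_mod_cast (by omega : (0:ℤ) ≤ upperWord α n)
    have h2 : β^(n+1) ≤ β^K := pow_le_pow_right₀ hβ.le (by omega)
    gcongr
  have hsum' : α * K ≤ ∑ n ∈ Finset.range K, (upperWord α n : ℝ) := by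
    have hW := upperWord_sum α K
    have hc : (∑ n ∈ Finset.range K, (upperWord α n : ℝ)) =
        (((⌈α⌉:ℤ) - 1) * K + ⌈(α - ⌈α⌉ + 1) * (K:ℝ)⌉ : ℤ) := by exact_mod_cast congrArg Int.cast hW
    rw [hc]
    push_cast
    have := Int.le_ceil ((α - ⌈α⌉ + 1) * (K:ℝ))
    nlinarith [this]
  have hfin : (∑ n ∈ Finset.range K, (upperWord α n : ℝ)) / β^K ≤ 1 := by
    rw [Finset.sum_div]
    exact le_trans (Finset.sum_le_sum hterm) hpart
  rw [div_le_one (by positivity)] at hfin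
  linarith

set_option maxHeartbeats 1000000 in
lemma root_close_of_le (M : ℝ) (u v : ℕ → ℤ)
    (hu0 : 1 ≤ u 0) (hu : ∀ n, 0 ≤ u n ∧ (u n:ℝ) ≤ M) (hv : ∀ n, 0 ≤ v n ∧ (v n:ℝ) ≤ M)
    (N : ℕ) (hagree : ∀ n < N, u n = v n)
    {β γ : ℝ} (hβ : 1 < β) (hγ : 1 < γ) (hle : β ≤ γ)
    (hfu : ∑' n:ℕ, (u n:ℝ)/β^(n+1) = 1) (hfv : ∑' n:ℕ, (v n:ℝ)/γ^(n+1) = 1) :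
    γ - β ≤ β * γ * (M * (1/γ)^N / (γ - 1)) := by
  have hβ0 : (0:ℝ) < β := lt_trans one_pos hβ
  have hγ0 : (0:ℝ) < γ := lt_trans one_pos hγ
  have habsu : ∀ n, |(u n:ℝ)| ≤ M := by
    intro n; rw [abs_of_nonneg (by exact_mod_cast (hu n).1)]; exact (hu n).2
  have habsv : ∀ n, |(v n:ℝ)| ≤ M := by
    intro n; rw [abs_of_nonneg (by exact_mod_cast (hv n).1)]; exact (hv n).2
  have hsuβ : Summable (fun n => (u n:ℝ)/β^(n+1)) := summable_digits _ _ habsu hβ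
  have hsuγ : Summable (fun n => (u n:ℝ)/γ^(n+1)) := summable_digits _ _ habsu hγ
  have hsvγ : Summable (fun n => (v n:ℝ)/γ^(n+1)) := summable_digits _ _ habsv hγ
  -- Step A
  have stepA : 1/β - 1/γ ≤ 1 - ∑' n:ℕ, (u n:ℝ)/γ^(n+1) := by
    have hsd : Summable (fun n => (u n:ℝ)/β^(n+1) - (u n:ℝ)/γ^(n+1)) := hsuβ.sub hsuγ
    have htd : ∑' n:ℕ, ((u n:ℝ)/β^(n+1) - (u n:ℝ)/γ^(n+1))
        = 1 - ∑' n:ℕ, (u n:ℝ)/γ^(n+1) := by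
      rw [Summable.tsum_sub hsuβ hsuγ, hfu]
    have hdnn : ∀ n, 0 ≤ (u n:ℝ)/β^(n+1) - (u n:ℝ)/γ^(n+1) := by
      intro n
      have h1 : (0:ℝ) ≤ (u n:ℝ) := by exact_mod_cast (hu n).1
      have h2 : β^(n+1) ≤ γ^(n+1) := pow_le_pow_left₀ hβ0.le hle _
      have : (u n:ℝ)/γ^(n+1) ≤ (u n:ℝ)/β^(n+1) := by gcongr
      linarith
    have hd0 : 1/β - 1/γ ≤ (u 0:ℝ)/β^(0+1) - (u 0:ℝ)/γ^(0+1) := by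
      have h1 : (1:ℝ) ≤ (u 0:ℝ) := by exact_mod_cast hu0
      have h2 : 1/γ ≤ 1/β := by gcongr
      norm_num only
      rw [pow_one, pow_one, show (u 0:ℝ)/β - (u 0:ℝ)/γ = (u 0:ℝ) * (1/β - 1/γ) from by ring]
      nlinarith
    calc 1/β - 1/γ ≤ (u 0:ℝ)/β^(0+1) - (u 0:ℝ)/γ^(0+1) := hd0
      _ ≤ ∑' n:ℕ, ((u n:ℝ)/β^(n+1) - (u n:ℝ)/γ^(n+1)) := Summable.le_tsum hsd 0 (fun n _ => hdnn n)
      _ = 1 - ∑' n:ℕ, (u n:ℝ)/γ^(n+1) := htd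
  -- Step B
  have stepB : |∑' n:ℕ, (u n:ℝ)/γ^(n+1) - 1| ≤ M * (1/γ)^N / (γ - 1) := by
    have hw : Summable (fun n => ((u n:ℝ) - (v n:ℝ))/γ^(n+1)) := by
      have : (fun n => ((u n:ℝ) - (v n:ℝ))/γ^(n+1))
          = fun n => (u n:ℝ)/γ^(n+1) - (v n:ℝ)/γ^(n+1) := by
        funext n; ring
      rw [this]; exact hsuγ.sub hsvγ
    have he : ∑' n:ℕ, (u n:ℝ)/γ^(n+1) - 1
        = ∑' n:ℕ, ((u (n+N):ℝ) - (v (n+N):ℝ))/γ^(n+N+1) := by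
      have e1 : ∑' n:ℕ, (u n:ℝ)/γ^(n+1) - 1
          = ∑' n:ℕ, ((u n:ℝ) - (v n:ℝ))/γ^(n+1) := by
        rw [show (fun n:ℕ => ((u n:ℝ) - (v n:ℝ))/γ^(n+1))
            = fun n => (u n:ℝ)/γ^(n+1) - (v n:ℝ)/γ^(n+1) from by funext n; ring]
        rw [Summable.tsum_sub hsuγ hsvγ, hfv]
      rw [e1, ← Summable.sum_add_tsum_nat_add N hw]
      have : ∑ n ∈ Finset.range N, ((u n:ℝ) - (v n:ℝ))/γ^(n+1) = 0 := by
        apply Finset.sum_eq_zero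
        intro n hn
        rw [Finset.mem_range] at hn
        rw [hagree n hn]
        ring
      rw [this, zero_add]
    rw [he]
    have hbound : ∀ n:ℕ, ‖((u (n+N):ℝ) - (v (n+N):ℝ))/γ^(n+N+1)‖
        ≤ (M * (1/γ)^N) * (1/γ)^(n+1) := by
      intro n
      have hpow : (0:ℝ) < γ^(n+N+1) := by positivity
      rw [Real.norm_eq_abs, abs_div, abs_of_pos hpow]
      have h1 : |(u (n+N):ℝ) - (v (n+N):ℝ)| ≤ M := by
        have := habsu (n+N); have := habsv (n+N)
        have h2 : (0:ℝ) ≤ (u (n+N):ℝ) := by exact_mod_cast (hu (n+N)).1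
        have h3 : (0:ℝ) ≤ (v (n+N):ℝ) := by exact_mod_cast (hv (n+N)).1
        rw [abs_sub_le_iff]
        constructor <;> [skip; skip] <;>
          [linarith [le_abs_self ((u (n+N):ℝ)), (hu (n+N)).2];
           linarith [(hv (n+N)).2]]
      have e2 : (M * (1/γ)^N) * (1/γ)^(n+1) = M / γ^(n+N+1) := by
        rw [one_div, inv_pow, inv_pow]
        rw [show n+N+1 = N + (n+1) by omega, pow_add]
        field_simp
        ring
      rw [e2]
      gcongr
    have hsb : Summable (fun n:ℕ => (M * (1/γ)^N) * (1/γ)^(n+1)) := by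
      apply Summable.mul_left
      have hr0 : (0:ℝ) ≤ 1/γ := by positivity
      have hr1 : 1/γ < 1 := by rw [div_lt_one hγ0]; exact hγ
      exact (summable_geometric_of_lt_one hr0 hr1).comp_injective (add_left_injective 1)
    have hw' : Summable (fun n:ℕ => ((u (n+N):ℝ) - (v (n+N):ℝ))/γ^(n+N+1)) := by
      exact (summable_nat_add_iff N).mpr hw
    calc |∑' n:ℕ, ((u (n+N):ℝ) - (v (n+N):ℝ))/γ^(n+N+1)|
        ≤ ∑' n:ℕ, ‖((u (n+N):ℝ) - (v (n+N):ℝ))/γ^(n+N+1)‖ := by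
          rw [← Real.norm_eq_abs]
          exact norm_tsum_le_tsum_norm hw'.norm
      _ ≤ ∑' n:ℕ, (M * (1/γ)^N) * (1/γ)^(n+1) := Summable.tsum_le_tsum hbound hw'.norm hsb
      _ = (M * (1/γ)^N) * (1/(γ-1)) := by rw [tsum_mul_left, tsum_inv_pow_succ hγ]
      _ = M * (1/γ)^N / (γ - 1) := by ring
  -- combine
  have hcomb : 1/β - 1/γ ≤ M * (1/γ)^N / (γ - 1) := by
    have := neg_abs_le (∑' n:ℕ, (u n:ℝ)/γ^(n+1) - 1)
    have h2 : 1 - ∑' n:ℕ, (u n:ℝ)/γ^(n+1) ≤ |∑' n:ℕ, (u n:ℝ)/γ^(n+1) - 1| := by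
      rw [abs_sub_comm] at *
      exact le_abs_self _
    linarith [stepA, stepB]
  have e3 : 1/β - 1/γ = (γ - β)/(β*γ) := by field_simp
  rw [e3, div_le_iff₀ (by positivity)] at hcomb
  linarith [hcomb]

lemma root_close_sym (M ρ B : ℝ) (hρ : 1 < ρ) (u v : ℕ → ℤ)
    (hu0 : 1 ≤ u 0) (hv0 : 1 ≤ v 0)
    (hu : ∀ n, 0 ≤ u n ∧ (u n:ℝ) ≤ M) (hv : ∀ n, 0 ≤ v n ∧ (v n:ℝ) ≤ M)
    (N : ℕ) (hagree : ∀ n < N, u n = v n)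
    {β γ : ℝ} (hβρ : ρ ≤ β) (hβB : β ≤ B) (hγρ : ρ ≤ γ) (hγB : γ ≤ B)
    (hfu : ∑' n:ℕ, (u n:ℝ)/β^(n+1) = 1) (hfv : ∑' n:ℕ, (v n:ℝ)/γ^(n+1) = 1) :
    |β - γ| ≤ B * B * (M * (1/ρ)^N / (ρ - 1)) := by
  have hβ : 1 < β := lt_of_lt_of_le hρ hβρ
  have hγ : 1 < γ := lt_of_lt_of_le hρ hγρ
  have hM : (1:ℝ) ≤ M := le_trans (by exact_mod_cast hu0) (hu 0).2
  have hρ0 : (0:ℝ) < ρ - 1 := by linarith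
  have hgen : ∀ x y : ℝ, 1 < x → 1 < y → ρ ≤ x → x ≤ B → ρ ≤ y → y ≤ B →
      x * y * (M * (1/y)^N / (y - 1)) ≤ B * B * (M * (1/ρ)^N / (ρ - 1)) := by
    intro x y hx hy hxρ hxB hyρ hyB
    have hρ0' : (0:ℝ) < ρ := by linarith
    have h1 : (1/y)^N ≤ (1/ρ)^N :=
      pow_le_pow_left₀ (by positivity) (one_div_le_one_div_of_le hρ0' hyρ) N
    have h2 : M * (1/y)^N / (y - 1) ≤ M * (1/ρ)^N / (ρ - 1) := by
      apply div_le_div₀ (by positivity) (by nlinarith) hρ0 (by linarith)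
    have h3 : (0:ℝ) ≤ M * (1/y)^N / (y - 1) := div_nonneg (by positivity) (by linarith)
    have hB0 : (0:ℝ) ≤ B := by linarith
    have hxyB : x * y ≤ B * B := by nlinarith
    calc x * y * (M * (1/y)^N / (y - 1)) ≤ B * B * (M * (1/y)^N / (y - 1)) :=
          mul_le_mul_of_nonneg_right hxyB h3
      _ ≤ B * B * (M * (1/ρ)^N / (ρ - 1)) := mul_le_mul_of_nonneg_left h2 (by positivity)
  rcases le_total β γ with h | h
  · rw [abs_sub_comm, abs_of_nonneg (by linarith)]
    refine le_trans (root_close_of_le M u v hu0 hu hv N hagree hβ hγ h hfu hfv) ?_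
    exact hgen β γ hβ hγ hβρ hβB hγρ hγB
  · rw [abs_of_nonneg (by linarith)]
    refine le_trans (root_close_of_le M v u hv0 hv hu N
      (fun n hn => (hagree n hn).symm) hγ hβ h hfv hfu) ?_
    exact hgen γ β hγ hβ hγρ hγB hβρ hβB

lemma squeeze_aux (C rr q : ℝ) (hC : 0 ≤ C) (hrr0 : 0 < rr) (hrr1 : rr < 1) (hq : 0 < q)
    (f ε : ℝ → ℝ) (l : Filter ℝ)
    (hbound : ∀ᶠ x in l, |f x| ≤ C * rr ^ (⌊1/(2*q*ε x)⌋₊) / ε x)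
    (hε : Tendsto ε l (nhdsWithin 0 (Set.Ioi 0))) : Tendsto f l (nhds 0) := by
  set a : ℝ := -(Real.log rr)/(2*q) with ha_def
  have hlog : Real.log rr < 0 := Real.log_neg hrr0 hrr1
  have ha : 0 < a := by
    apply div_pos (by linarith) (by linarith)
  -- the majorant tends to zero
  have hTT : Tendsto (fun t : ℝ => t * Real.exp (-(a*t))) atTop (nhds 0) := by
    have h1 : Tendsto (fun y : ℝ => y^1 * Real.exp (-y)) atTop (nhds 0) :=
      Real.tendsto_pow_mul_exp_neg_atTop_nhds_zero 1
    have h2 : Tendsto (fun t : ℝ => a * t) atTop atTop :=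
      Tendsto.const_mul_atTop ha tendsto_id
    have h3 := h1.comp h2
    have h4 := h3.const_mul (1/a)
    rw [mul_zero] at h4
    convert h4 using 2 with t
    simp only [Function.comp]
    rw [pow_one]
    field_simp
  have hinv : Tendsto (fun x => (ε x)⁻¹) l atTop := tendsto_inv_nhdsGT_zero.comp hε
  have hH : Tendsto (fun x => (C/rr) * ((ε x)⁻¹ * Real.exp (-(a * (ε x)⁻¹)))) l (nhds 0) := by
    have := (hTT.comp hinv).const_mul (C/rr)
    rw [mul_zero] at this
    exact this
  apply squeeze_zero_norm' _ hH
  have hεpos : ∀ᶠ x in l, 0 < ε x := hε.eventually (eventually_mem_nhdsWithin)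
  filter_upwards [hbound, hεpos] with x hb hp
  rw [Real.norm_eq_abs]
  refine le_trans hb ?_
  set e := ε x
  set t := e⁻¹ with ht_def
  set X : ℝ := 1/(2*q*e) with hX_def
  have htpos : 0 < t := by positivity
  have hXt : X = t/(2*q) := by rw [hX_def, ht_def]; field_simp
  have hXpos : 0 < X := by rw [hXt]; positivity
  have hfloor : X - 1 ≤ (⌊X⌋₊ : ℝ) := (Nat.sub_one_lt_floor X).le
  have h5 : rr ^ (⌊X⌋₊:ℕ) ≤ Real.exp (Real.log rr * (X - 1)) := by
    rw [← Real.rpow_natCast rr (⌊X⌋₊), ← Real.rpow_def_of_pos hrr0]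
    exact Real.rpow_le_rpow_of_exponent_ge hrr0 hrr1.le hfloor
  have h6 : Real.exp (Real.log rr * (X - 1)) = Real.exp (-(a*t)) * rr⁻¹ := by
    rw [mul_sub, mul_one, Real.exp_sub, Real.exp_log hrr0]
    congr 2
    rw [hXt, ha_def]
    field_simp
  have h7 : C * rr ^ (⌊X⌋₊:ℕ) / e = C * rr ^ (⌊X⌋₊:ℕ) * t := by
    rw [ht_def, div_eq_mul_inv]
  rw [h7]
  calc C * rr ^ (⌊X⌋₊:ℕ) * t ≤ C * (Real.exp (-(a*t)) * rr⁻¹) * t := by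
        apply mul_le_mul_of_nonneg_right _ htpos.le
        apply mul_le_mul_of_nonneg_left _ hC
        rw [← h6]; exact h5
    _ = (C/rr) * (t * Real.exp (-(a*t))) := by field_simp

set_option maxHeartbeats 2000000 in
/-- At a positive rational `α₀`: (a) the left difference quotient of `Δ` tends to 0;
(b) if `β₊` is the right limit of `Δ` at `α₀`, the right difference quotient formed with
`β₊` tends to 0. -/
theorem devilStaircase_one_sided_derivatives_at_rational (Δ : ℝ → ℝ)
    (hΔ : IsDevilStaircase Δ) (α₀ : ℝ) (h0 : 0 < α₀) (hrat : ∃ r : ℚ, (r : ℝ) = α₀) :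
    Tendsto (fun α : ℝ => (Δ α₀ - Δ α) / (α₀ - α))
      (nhdsWithin α₀ (Set.Iio α₀)) (nhds 0) ∧
    (∀ βp : ℝ, Tendsto Δ (nhdsWithin α₀ (Set.Ioi α₀)) (nhds βp) →
      Tendsto (fun α : ℝ => (Δ α - βp) / (α - α₀))
        (nhdsWithin α₀ (Set.Ioi α₀)) (nhds 0)) := by
  obtain ⟨r, hr⟩ := hrat
  set q : ℕ := r.den with hq_def
  have hq : 0 < q := r.pos
  have hqR : (0:ℝ) < q := by exact_mod_cast hq
  have hqα : ((r.num : ℤ):ℝ) = (q:ℝ) * α₀ := by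
    rw [← hr, Rat.cast_def]; field_simp; rfl
  set b₀ : ℤ := ⌈α₀⌉ with hb₀_def
  set s₀ : ℝ := α₀ - b₀ + 1 with hs₀_def
  have hs₀pos : 0 < s₀ := slope_pos h0
  have hs₀le : s₀ ≤ 1 := slope_le_one
  have hb₀1 : 1 ≤ b₀ := one_le_ceil_of_pos h0
  have hqs₀ : ((r.num - q*(b₀-1) : ℤ):ℝ) = (q:ℝ) * s₀ := by
    push_cast
    rw [hqα]; ring
  -- constants
  set K : ℕ := ⌈(4:ℝ)/α₀⌉₊ with hK_def
  have hK4 : (4:ℝ)/α₀ ≤ K := Nat.le_ceil _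
  have hKpos : 0 < K := Nat.ceil_pos.mpr (by positivity)
  set ρ : ℝ := (2:ℝ) ^ ((K:ℝ)⁻¹) with hρ_def
  have hρ1 : 1 < ρ :=
    Real.one_lt_rpow_iff_of_pos (by norm_num) |>.mpr (Or.inl ⟨by norm_num, by positivity⟩)
  have hρK : ρ ^ K = 2 := Real.rpow_inv_natCast_pow (by norm_num) (by omega)
  set M : ℝ := (b₀:ℝ) + 1 with hM_def
  set B : ℝ := (b₀:ℝ) + 2 with hB_def
  have hb₀R : (1:ℝ) ≤ (b₀:ℝ) := by exact_mod_cast hb₀1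
  set rr : ℝ := 1/ρ with hrr_def
  have hrr0 : 0 < rr := by rw [hrr_def]; positivity
  have hrr1 : rr < 1 := by rw [hrr_def, div_lt_one (by linarith)]; exact hρ1
  set C : ℝ := B * B * M / (ρ - 1) with hC_def
  have hC0 : 0 ≤ C := by
    apply div_nonneg _ (by linarith)
    nlinarith
  have hroot : ∀ α : ℝ, 0 < α → 1 < Δ α ∧
      ∑' n:ℕ, (upperWord α n:ℝ)/(Δ α)^(n+1) = 1 := fun α hα => (hΔ.2 α hα).1
  -- ceiling comparison on the window
  have hcc : ∀ α : ℝ, α ≤ α₀ + 1 → ⌈α⌉ ≤ b₀ + 1 := by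
    intro α h2
    have h3 : ⌈α⌉ ≤ ⌈α₀ + 1⌉ := Int.ceil_le_ceil h2
    rw [Int.ceil_add_one] at h3
    omega
  -- uniform root bounds
  have hbnd : ∀ α : ℝ, α₀/2 ≤ α → α ≤ α₀ + 1 → ρ ≤ Δ α ∧ Δ α ≤ B := by
    intro α h1 h2
    have hαpos : 0 < α := lt_of_lt_of_le (by linarith) h1
    obtain ⟨hΔ1, hΔs⟩ := hroot α hαpos
    constructor
    · by_contra hlt
      push_neg at hlt
      have hpow := root_pow_ge hαpos hΔ1 hΔs K
      have h2K : (2:ℝ) ≤ α * K := by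
        have he : (α₀/2) * ((4:ℝ)/α₀) = 2 := by field_simp; ring
        calc (2:ℝ) = (α₀/2) * (4/α₀) := he.symm
          _ ≤ α * K := by
              apply mul_le_mul h1 hK4 (by positivity) (by linarith)
      have hlt2 : (Δ α)^K < ρ^K :=
        pow_lt_pow_left₀ hlt (by linarith) (by omega)
      rw [hρK] at hlt2
      linarith
    · have h4 := root_upper hαpos hΔ1 hΔs
      have h5 : ⌈α⌉ ≤ b₀ + 1 := hcc α h2
      have h6 : ((⌈α⌉:ℤ):ℝ) + 1 ≤ B := by
        rw [hB_def]
        have : ((⌈α⌉:ℤ):ℝ) ≤ (b₀:ℝ) + 1 := by exact_mod_cast h5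
        linarith
      linarith
  -- word bounds
  have hword : ∀ α : ℝ, α₀/2 ≤ α → α ≤ α₀ + 1 →
      1 ≤ upperWord α 0 ∧ ∀ n, 0 ≤ upperWord α n ∧ (upperWord α n:ℝ) ≤ M := by
    intro α h1 h2
    have hαpos : 0 < α := lt_of_lt_of_le (by linarith) h1
    have h1c : 1 ≤ ⌈α⌉ := one_le_ceil_of_pos hαpos
    have h5 : ⌈α⌉ ≤ b₀ + 1 := hcc α h2
    refine ⟨by rw [upperWord_zero hαpos]; exact h1c, fun n => ⟨?_, ?_⟩⟩
    · have := upperWord_nonneg hαpos n; omega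
    · have h7 := upperWord_le hαpos n
      have : (upperWord α n : ℝ) ≤ ((⌈α⌉:ℤ):ℝ) := by exact_mod_cast h7
      have h8 : ((⌈α⌉:ℤ):ℝ) ≤ (b₀:ℝ) + 1 := by exact_mod_cast h5
      rw [hM_def]; linarith
  -- generic application of root_close_sym
  have hclose : ∀ (x y : ℝ) (N : ℕ), α₀/2 ≤ x → x ≤ α₀ + 1 → α₀/2 ≤ y → y ≤ α₀ + 1 →
      (∀ n < N, upperWord x n = upperWord y n) → |Δ x - Δ y| ≤ C * rr ^ N := by
    intro x y N hx1 hx2 hy1 hy2 hagree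
    have hxpos : 0 < x := lt_of_lt_of_le (by linarith) hx1
    have hypos : 0 < y := lt_of_lt_of_le (by linarith) hy1
    obtain ⟨hx0, hxb⟩ := hword x hx1 hx2
    obtain ⟨hy0, hyb⟩ := hword y hy1 hy2
    obtain ⟨hxρ, hxB⟩ := hbnd x hx1 hx2
    obtain ⟨hyρ, hyB⟩ := hbnd y hy1 hy2
    have := root_close_sym M ρ B hρ1 (upperWord x) (upperWord y) hx0 hy0 hxb hyb N hagree
      hxρ hxB hyρ hyB (hroot x hxpos).2 (hroot y hypos).2
    refine le_trans this (le_of_eq ?_)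
    rw [hC_def, hrr_def]
    ring
  -- left word agreement
  have hagL : ∀ α : ℝ, α₀ - min s₀ (α₀/2) < α → α < α₀ →
      ∀ n : ℕ, n < ⌊1/(2*(q:ℝ)*(α₀-α))⌋₊ → upperWord α₀ n = upperWord α n := by
    intro α hα1 hα2 n hn
    have hεpos : 0 < α₀ - α := by linarith
    have hη1 : α₀ - min s₀ (α₀/2) ≥ α₀ - s₀ := by
      have := min_le_left s₀ (α₀/2); linarith
    have hceil : ⌈α⌉ = b₀ := by
      apply Int.ceil_eq_iff.mpr
      constructor
      · push_cast
        have : (b₀:ℝ) - 1 = α₀ - s₀ := by rw [hs₀_def]; ring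
        rw [this]; linarith
      · push_cast
        have : α₀ ≤ (b₀:ℝ) := Int.le_ceil α₀
        linarith
    have hNle : ((⌊1/(2*(q:ℝ)*(α₀-α))⌋₊:ℕ):ℝ) ≤ 1/(2*(q:ℝ)*(α₀-α)) := Nat.floor_le (by positivity)
    have hn1 : ((n:ℝ)+1) ≤ 1/(2*(q:ℝ)*(α₀-α)) := by
      refine le_trans ?_ hNle
      exact_mod_cast Nat.succ_le_of_lt hn
    have hkeyG : ∀ m : ℕ, (m:ℝ) ≤ (n:ℝ)+1 →
        ⌈(α - (b₀:ℝ) + 1) * (m:ℝ)⌉ = ⌈s₀ * (m:ℝ)⌉ := by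
      intro m hm
      have hm0 : (0:ℝ) ≤ (m:ℝ) := Nat.cast_nonneg m
      apply ceilL q hq (s₀ * (m:ℝ)) _ ((r.num - q*(b₀-1)) * m)
      · have hh := hqs₀
        push_cast at hh ⊢
        linear_combination (m:ℝ) * hh
      · have : α - (b₀:ℝ) + 1 ≤ s₀ := by rw [hs₀_def]; linarith
        nlinarith
      · have he : s₀ * (m:ℝ) - (α - (b₀:ℝ) + 1) * (m:ℝ) = (α₀ - α) * m := by
          rw [hs₀_def]; ring
        rw [he]
        have h1 : (α₀ - α) * m ≤ (α₀ - α) * ((n:ℝ)+1) := by nlinarith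
        have h2 : (α₀ - α) * ((n:ℝ)+1) ≤ (α₀-α) * (1/(2*(q:ℝ)*(α₀-α))) := by nlinarith
        have h3 : (α₀-α) * (1/(2*(q:ℝ)*(α₀-α))) = 1/(2*(q:ℝ)) := by field_simp
        have h4 : 1/(2*(q:ℝ)) < 1/(q:ℝ) := by
          rw [div_lt_div_iff₀ (by linarith) hqR]; linarith
        linarith
    have e2 : ⌈(α - (b₀:ℝ) + 1) * ((n:ℝ)+1)⌉ = ⌈s₀ * ((n:ℝ)+1)⌉ := by
      have := hkeyG (n+1) (by push_cast; linarith)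
      push_cast at this
      exact this
    have e3 : ⌈(α - (b₀:ℝ) + 1) * (n:ℝ)⌉ = ⌈s₀ * (n:ℝ)⌉ := hkeyG n (by linarith)
    have hu1 : upperWord α n = (b₀ - 1) +
        (⌈(α - (b₀:ℝ) + 1) * ((n:ℝ)+1)⌉ - ⌈(α - (b₀:ℝ) + 1) * (n:ℝ)⌉) := by
      unfold upperWord
      rw [hceil]
    have hu2 : upperWord α₀ n = (b₀ - 1) + (⌈s₀ * ((n:ℝ)+1)⌉ - ⌈s₀ * (n:ℝ)⌉) := rfl
    rw [hu1, hu2, e2, e3]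
  -- left estimate
  have hestL : ∀ α : ℝ, α₀ - min s₀ (α₀/2) < α → α < α₀ →
      |Δ α₀ - Δ α| ≤ C * rr ^ ⌊1/(2*(q:ℝ)*(α₀-α))⌋₊ := by
    intro α hα1 hα2
    have hη2 : α₀ - min s₀ (α₀/2) ≥ α₀ - α₀/2 := by
      have := min_le_right s₀ (α₀/2); linarith
    apply hclose α₀ α _ (by linarith) (by linarith) (by linarith) (by linarith)
    exact hagL α hα1 hα2
  constructor
  · -- part (a)
    apply squeeze_aux C rr (q:ℝ) hC0 hrr0 hrr1 hqR _ (fun α => α₀ - α)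
    · have hη0 : 0 < min s₀ (α₀/2) := lt_min hs₀pos (by linarith)
      have hmem : Set.Ioo (α₀ - min s₀ (α₀/2)) α₀ ∈ nhdsWithin α₀ (Set.Iio α₀) :=
        Ioo_mem_nhdsLT_of_mem ⟨by linarith, le_refl α₀⟩
      filter_upwards [hmem] with α hα
      have hε : 0 < α₀ - α := by linarith [hα.2]
      rw [abs_div, abs_of_pos hε]
      gcongr
      exact hestL α hα.1 hα.2
    · apply tendsto_nhdsWithin_of_tendsto_nhds_of_eventually_within
      · have h1 : Tendsto (fun α : ℝ => α₀ - α) (nhds α₀) (nhds (α₀ - α₀)) :=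
          tendsto_const_nhds.sub tendsto_id
        rw [sub_self] at h1
        exact h1.mono_left nhdsWithin_le_nhds
      · filter_upwards [self_mem_nhdsWithin] with α hα
        simp only [Set.mem_Iio] at hα
        simp only [Set.mem_Ioi]
        linarith
  · -- part (b)
    intro βp hβp
    -- set up right-side slope data
    obtain ⟨b', t₀, hb't₀, ht₀0, ht₀1, mt, hmt⟩ :
        ∃ (b' : ℤ) (t₀ : ℝ), (b':ℝ) - 1 + t₀ = α₀ ∧ 0 ≤ t₀ ∧ t₀ < 1 ∧
          ∃ m:ℤ, (m:ℝ) = (q:ℝ)*t₀ := by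
      by_cases hs1 : s₀ = 1
      · refine ⟨b₀ + 1, 0, ?_, le_refl 0, one_pos, 0, by simp⟩
        push_cast
        rw [hs₀_def] at hs1
        linarith
      · exact ⟨b₀, s₀, by push_cast; rw [hs₀_def]; ring, hs₀pos.le,
          lt_of_le_of_ne hs₀le hs1, ⟨r.num - q*(b₀-1), hqs₀⟩⟩
    have hceilR' : ∀ α : ℝ, α₀ < α → α < α₀ + (1 - t₀) → ⌈α⌉ = b' ∧
        ∀ m:ℕ, 0 < m → (m:ℝ)*(α-α₀) < 1/(q:ℝ) →
          ⌈(α - (b':ℝ) + 1)*(m:ℝ)⌉ = ⌊t₀*(m:ℝ)⌋ + 1 := by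
      intro α h1 h2
      have hceil : ⌈α⌉ = b' := by
        apply Int.ceil_eq_iff.mpr
        constructor
        · push_cast; linarith
        · push_cast; linarith
      refine ⟨hceil, fun m hm hcond => ?_⟩
      have hmR : (0:ℝ) < (m:ℝ) := by exact_mod_cast hm
      apply ceilR q hq (t₀*(m:ℝ)) _ (mt*m)
      · push_cast
        linear_combination (m:ℝ) * hmt
      · have : α - (b':ℝ) + 1 = t₀ + (α - α₀) := by linarith
        rw [this]
        nlinarith
      · have : (α - (b':ℝ) + 1)*(m:ℝ) = t₀*(m:ℝ) + (α-α₀)*m := by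
          rw [show α - (b':ℝ) + 1 = t₀ + (α - α₀) from by linarith]
          ring
        rw [this]
        have : (α-α₀)*m < 1/(q:ℝ) := by rw [mul_comm]; exact hcond
        linarith
    -- right estimate
    have hestR : ∀ α : ℝ, α₀ < α → α < α₀ + (1 - t₀) →
        |Δ α - βp| ≤ C * rr ^ ⌊1/(2*(q:ℝ)*(α-α₀))⌋₊ := by
      intro α h1 h2
      set N := ⌊1/(2*(q:ℝ)*(α-α₀))⌋₊ with hN_def
      have hεpos : 0 < α - α₀ := by linarith
      have hest' : ∀ α' : ℝ, α₀ < α' → α' < α → |Δ α - Δ α'| ≤ C * rr ^ N := by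
        intro α' h1' h2'
        apply hclose α α' N (by linarith) (by linarith) (by linarith) (by linarith)
        intro n hn
        obtain ⟨hcα, hkα⟩ := hceilR' α h1 h2
        obtain ⟨hcα', hkα'⟩ := hceilR' α' h1' (by linarith)
        have hNle : ((N:ℕ):ℝ) ≤ 1/(2*(q:ℝ)*(α-α₀)) := Nat.floor_le (by positivity)
        have hn1 : ((n:ℝ)+1) ≤ 1/(2*(q:ℝ)*(α-α₀)) := by
          refine le_trans ?_ hNle
          exact_mod_cast Nat.succ_le_of_lt hn
        have hcond : ∀ m:ℕ, (m:ℝ) ≤ (n:ℝ)+1 → (m:ℝ)*(α-α₀) < 1/(q:ℝ) := by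
          intro m hm
          have h3 : (α-α₀) * (1/(2*(q:ℝ)*(α-α₀))) = 1/(2*(q:ℝ)) := by field_simp
          have h4 : 1/(2*(q:ℝ)) < 1/(q:ℝ) := by
            rw [div_lt_div_iff₀ (by linarith) hqR]; linarith
          have hm0 : (0:ℝ) ≤ (m:ℝ) := Nat.cast_nonneg m
          nlinarith
        have hcond' : ∀ m:ℕ, (m:ℝ) ≤ (n:ℝ)+1 → (m:ℝ)*(α'-α₀) < 1/(q:ℝ) := by
          intro m hm
          have hm0 : (0:ℝ) ≤ (m:ℝ) := Nat.cast_nonneg m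
          have := hcond m hm
          nlinarith
        have e2 : ⌈(α - (b':ℝ) + 1) * ((n:ℝ)+1)⌉ = ⌈(α' - (b':ℝ) + 1) * ((n:ℝ)+1)⌉ := by
          have c1 := hcond (n+1) (by push_cast; linarith)
          have c2 := hcond' (n+1) (by push_cast; linarith)
          push_cast at c1 c2
          have u1 := hkα (n+1) (by omega) (by push_cast; exact c1)
          have u2 := hkα' (n+1) (by omega) (by push_cast; exact c2)
          push_cast at u1 u2
          rw [u1, u2]
        have e3 : ⌈(α - (b':ℝ) + 1) * (n:ℝ)⌉ = ⌈(α' - (b':ℝ) + 1) * (n:ℝ)⌉ := by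
          rcases Nat.eq_zero_or_pos n with hn0 | hn0
          · subst hn0; norm_num
          · have u1 := hkα n hn0 (hcond n (by linarith))
            have u2 := hkα' n hn0 (hcond' n (by linarith))
            rw [u1, u2]
        have hu1 : upperWord α n = (b' - 1) +
            (⌈(α - (b':ℝ) + 1) * ((n:ℝ)+1)⌉ - ⌈(α - (b':ℝ) + 1) * (n:ℝ)⌉) := by
          unfold upperWord
          rw [hcα]
        have hu2 : upperWord α' n = (b' - 1) +
            (⌈(α' - (b':ℝ) + 1) * ((n:ℝ)+1)⌉ - ⌈(α' - (b':ℝ) + 1) * (n:ℝ)⌉) := by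
          unfold upperWord
          rw [hcα']
        rw [hu1, hu2, e2, e3]
      have hmem : Set.Ioo α₀ α ∈ nhdsWithin α₀ (Set.Ioi α₀) :=
        Ioo_mem_nhdsGT_of_mem ⟨le_refl α₀, h1⟩
      have hev : ∀ᶠ α' in nhdsWithin α₀ (Set.Ioi α₀), |Δ α - Δ α'| ≤ C*rr^N := by
        filter_upwards [hmem] with α' h
        exact hest' α' h.1 h.2
      have hlim : Tendsto (fun α' => |Δ α - Δ α'|) (nhdsWithin α₀ (Set.Ioi α₀))
          (nhds (|Δ α - βp|)) := (tendsto_const_nhds.sub hβp).abs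
      exact le_of_tendsto hlim hev
    -- squeeze
    apply squeeze_aux C rr (q:ℝ) hC0 hrr0 hrr1 hqR _ (fun α => α - α₀)
    · have hmem : Set.Ioo α₀ (α₀ + (1 - t₀)) ∈ nhdsWithin α₀ (Set.Ioi α₀) :=
        Ioo_mem_nhdsGT_of_mem ⟨le_refl α₀, by linarith⟩
      filter_upwards [hmem] with α hα
      have hε : 0 < α - α₀ := by linarith [hα.1]
      rw [abs_div, abs_of_pos hε]
      gcongr
      exact hestR α hα.1 hα.2
    · apply tendsto_nhdsWithin_of_tendsto_nhds_of_eventually_within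
      · have h1 : Tendsto (fun α : ℝ => α - α₀) (nhds α₀) (nhds (α₀ - α₀)) :=
          tendsto_id.sub tendsto_const_nhds
        rw [sub_self] at h1
        exact h1.mono_left nhdsWithin_le_nhds
      · filter_upwards [self_mem_nhdsWithin] with α hα
        simp only [Set.mem_Ioi] at hα
        simp only [Set.mem_Ioi]
        linarith
end

section
/- Let α be an irrational real number and let q_n denote the denominator of the n-th convergent of the regular continued fraction expansion of α. Then, as equalities in the extended real numbers, μ(α) = 1 + limsup_{n→∞} (log q_{n+1})/(log q_n) and log θ(α) = limsup_{n→∞} (log q_{n+1})/q_n. -/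
open Filter
open scoped ENNReal

/-- `‖x‖`: the distance from `x` to the nearest integer. -/
noncomputable def distNearestInt (x : ℝ) : ℝ := |x - round x|

/-- The irrationality exponent `μ(α) = sup {ν : liminf_q q^{ν−1}‖qα‖ = 0}`,
the supremum taken in the extended reals. -/
noncomputable def irrationalityExponent (α : ℝ) : EReal :=
  sSup ((fun ν : ℝ => (ν : EReal)) ''
    {ν : ℝ | liminf (fun q : ℕ =>
      (((q : ℝ) ^ (ν - 1) * distNearestInt (q * α) : ℝ) : EReal)) atTop = 0})

/-- The irrationality base `θ(α) = sup {λ ≥ 1 : liminf_q λ^q‖qα‖/q = 0}`,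
the supremum taken in the extended reals `[1, ∞]`. -/
noncomputable def irrationalityBase (α : ℝ) : ℝ≥0∞ :=
  sSup (ENNReal.ofReal ''
    {l : ℝ | 1 ≤ l ∧
      liminf (fun q : ℕ => ((l ^ q * distNearestInt (q * α) / q : ℝ) : EReal)) atTop = 0})

/-- The denominator `q_n` of the `n`-th convergent of the regular continued fraction of `α`. -/
noncomputable def cfDen (α : ℝ) (n : ℕ) : ℝ := (GenContFract.of α).dens n

section CFFacts

open GenContFract

variable {α : ℝ}

lemma cf_not_term (hα : Irrational α) (n : ℕ) : ¬(GenContFract.of α).TerminatedAt n := by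
  intro h
  have hterm : (GenContFract.of α).Terminates := ⟨n, h⟩
  obtain ⟨q, hq⟩ := (terminates_iff_rat α).mp hterm
  exact hα ⟨q, hq.symm⟩

lemma cf_stream_ne_none (hα : Irrational α) (n : ℕ) :
    IntFractPair.stream α n ≠ none := by
  cases n with
  | zero => simp [IntFractPair.stream]
  | succ m =>
    intro h
    exact cf_not_term hα m
      (of_terminatedAt_n_iff_succ_nth_intFractPair_stream_eq_none.mpr h)

lemma cf_one_le_den (hα : Irrational α) (n : ℕ) : (1 : ℝ) ≤ (GenContFract.of α).dens n := by
  have h := succ_nth_fib_le_of_nth_den (v := α) (n := n)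
    (Or.inr (cf_not_term hα (n - 1)))
  calc (1:ℝ) ≤ (Nat.fib (n+1) : ℝ) := by
        exact_mod_cast Nat.fib_pos.mpr n.succ_pos
    _ ≤ _ := h

lemma cf_den_pos (hα : Irrational α) (n : ℕ) : (0 : ℝ) < (GenContFract.of α).dens n :=
  lt_of_lt_of_le one_pos (cf_one_le_den hα n)

/-- Exact error formula with bounds on the auxiliary denominator. -/
lemma cf_err (hα : Irrational α) (n : ℕ) :
    ∃ r : ℝ, (GenContFract.of α).dens (n+1) ≤ r ∧ r < (GenContFract.of α).dens (n+1) + (GenContFract.of α).dens n ∧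
      (GenContFract.of α).dens n * α - (GenContFract.of α).nums n = (-1)^n / r := by
  obtain ⟨ifp, hifp⟩ := Option.ne_none_iff_exists'.mp (cf_stream_ne_none hα n)
  have hfr0 : ifp.fr ≠ 0 := by
    intro h
    exact cf_stream_ne_none hα (n+1) (IntFractPair.stream_eq_none_of_fr_eq_zero hifp h)
  have hfrpos : 0 < ifp.fr :=
    lt_of_le_of_ne (IntFractPair.nth_stream_fr_nonneg hifp) (Ne.symm hfr0)
  have hfrlt1 : ifp.fr < 1 := IntFractPair.nth_stream_fr_lt_one hifp
  have hs : (GenContFract.of α).s.get? n = some ⟨1, ((IntFractPair.of ifp.fr⁻¹).b : ℝ)⟩ :=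
    get?_of_eq_some_of_get?_intFractPair_stream_fr_ne_zero hifp hfr0
  set B : ℝ := ((GenContFract.of α).contsAux (n+1)).b with hB
  set pB : ℝ := ((GenContFract.of α).contsAux n).b with hpB
  have hsub := sub_convs_eq (v := α) hifp
  simp only [if_neg hfr0] at hsub
  have hBden : (GenContFract.of α).dens n = B := by rw [den_eq_conts_b, nth_cont_eq_succ_nth_contAux]
  have hrec := contsAux_recurrence (g := GenContFract.of α) hs rfl rfl
  have hden1 : (GenContFract.of α).dens (n+1) = (↑(IntFractPair.of ifp.fr⁻¹).b) * B + pB := by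
    rw [den_eq_conts_b, nth_cont_eq_succ_nth_contAux, hrec]; simp [hB, hpB]
  have hb : ((IntFractPair.of ifp.fr⁻¹).b : ℝ) = (⌊ifp.fr⁻¹⌋ : ℝ) := by
    simp [IntFractPair.of]
  have hfloor_le : (⌊ifp.fr⁻¹⌋ : ℝ) ≤ ifp.fr⁻¹ := Int.floor_le _
  have hlt_floor : ifp.fr⁻¹ < (⌊ifp.fr⁻¹⌋ : ℝ) + 1 := Int.lt_floor_add_one _
  have hBpos : 0 < B := by rw [← hBden]; exact cf_den_pos hα n
  have hpBnn : 0 ≤ pB := zero_le_of_contsAux_b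
  refine ⟨ifp.fr⁻¹ * B + pB, ?_, ?_, ?_⟩
  · rw [hden1, hb]
    nlinarith
  · rw [hden1, hb, ← hBden]
    have : (GenContFract.of α).dens n = B := hBden
    nlinarith [cf_den_pos hα n, hBden]
  · have hconv : (GenContFract.of α).convs n = (GenContFract.of α).nums n / (GenContFract.of α).dens n := conv_eq_num_div_den
    have h1 : α - (GenContFract.of α).nums n / (GenContFract.of α).dens n = (-1)^n / (B * (ifp.fr⁻¹ * B + pB)) := by
      rw [← hconv]; exact hsub
    have hdne : (GenContFract.of α).dens n ≠ 0 := (cf_den_pos hα n).ne'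
    have h2 : (GenContFract.of α).dens n * α - (GenContFract.of α).nums n
        = (GenContFract.of α).dens n * (α - (GenContFract.of α).nums n / (GenContFract.of α).dens n) := by
      field_simp
    rw [h2, h1, hBden]
    have hrpos : 0 < ifp.fr⁻¹ * B + pB := by positivity
    field_simp

lemma cf_int (hα : Irrational α) :
    ∀ n : ℕ, (∃ z : ℤ, (GenContFract.of α).nums n = (z:ℝ)) ∧
      (∃ z : ℤ, (GenContFract.of α).dens n = (z:ℝ)) := by
  have step : ∀ n : ℕ,
      ((∃ z : ℤ, (GenContFract.of α).nums n = (z:ℝ)) ∧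
        (∃ z : ℤ, (GenContFract.of α).dens n = (z:ℝ))) ∧
      ((∃ z : ℤ, (GenContFract.of α).nums (n+1) = (z:ℝ)) ∧
        (∃ z : ℤ, (GenContFract.of α).dens (n+1) = (z:ℝ))) := by
    intro n
    induction n with
    | zero =>
      obtain ⟨gp, hs⟩ := Option.ne_none_iff_exists'.mp (cf_not_term hα 0)
      have ha : gp.a = 1 := of_partNum_eq_one (partNum_eq_s_a hs)
      obtain ⟨z, hz⟩ := exists_int_eq_of_partDen (partDen_eq_s_b hs)
      refine ⟨⟨⟨⌊α⌋, ?_⟩, ⟨1, ?_⟩⟩, ⟨⟨z * ⌊α⌋ + 1, ?_⟩, ⟨z, ?_⟩⟩⟩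
      · rw [zeroth_num_eq_h, of_h_eq_floor]
      · rw [zeroth_den_eq_one]; norm_num
      · rw [first_num_eq hs, ha, hz, of_h_eq_floor]; push_cast; ring
      · rw [first_den_eq hs, hz]
    | succ m ih =>
      refine ⟨ih.2, ?_⟩
      obtain ⟨gp, hs⟩ := Option.ne_none_iff_exists'.mp (cf_not_term hα (m+1))
      have ha : gp.a = 1 := of_partNum_eq_one (partNum_eq_s_a hs)
      obtain ⟨b, hb⟩ := exists_int_eq_of_partDen (partDen_eq_s_b hs)
      obtain ⟨⟨pN, hpN⟩, ⟨pD, hpD⟩⟩ := ih.1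
      obtain ⟨⟨N, hN⟩, ⟨D, hD⟩⟩ := ih.2
      constructor
      · exact ⟨b * N + pN, by
          rw [nums_recurrence hs hpN hN, ha, hb]; push_cast; ring⟩
      · exact ⟨b * D + pD, by
          rw [dens_recurrence hs hpD hD, ha, hb]; push_cast; ring⟩
  exact fun n => (step n).1

lemma cf_det (hα : Irrational α) (n : ℕ) :
    (GenContFract.of α).nums n * (GenContFract.of α).dens (n+1) -
      (GenContFract.of α).dens n * (GenContFract.of α).nums (n+1) = (-1)^(n+1) :=
  SimpContFract.determinant (s := SimpContFract.of α) (cf_not_term hα n)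

lemma cf_best (hα : Irrational α) (n : ℕ) (q p : ℤ) (hq1 : 1 ≤ q)
    (hq2 : (q:ℝ) < (GenContFract.of α).dens (n+1)) :
    |(GenContFract.of α).dens n * α - (GenContFract.of α).nums n| ≤ |(q:ℝ) * α - (p:ℝ)| := by
  obtain ⟨⟨Pn, hPn⟩, ⟨Qn, hQn⟩⟩ := cf_int hα n
  obtain ⟨⟨Pn1, hPn1⟩, ⟨Qn1, hQn1⟩⟩ := cf_int hα (n+1)
  have hQnpos : 1 ≤ Qn := by
    have := cf_one_le_den hα n; rw [hQn] at this; exact_mod_cast this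
  have hQn1pos : 1 ≤ Qn1 := by
    have := cf_one_le_den hα (n+1); rw [hQn1] at this; exact_mod_cast this
  have hqQ : q < Qn1 := by rw [hQn1] at hq2; exact_mod_cast hq2
  set e : ℤ := (-1)^(n+1) with he_def
  have he : e * e = 1 := by
    rw [he_def, ← pow_add]
    exact Even.neg_one_pow ⟨n+1, by ring⟩
  have hdetz : Pn * Qn1 - Qn * Pn1 = e := by
    have := cf_det hα n
    rw [hPn, hQn, hPn1, hQn1] at this
    exact_mod_cast this
  set x : ℤ := e * (p * Qn1 - q * Pn1) with hx_def
  set y : ℤ := e * (q * Pn - p * Qn) with hy_def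
  have hx : x * Qn + y * Qn1 = q := by
    rw [hx_def, hy_def]
    linear_combination (e*q) * hdetz + q * he
  have hy : x * Pn + y * Pn1 = p := by
    rw [hx_def, hy_def]
    linear_combination (e*p) * hdetz + p * he
  obtain ⟨r, hr1, hr2, hr3⟩ := cf_err hα n
  obtain ⟨r', hr1', hr2', hr3'⟩ := cf_err hα (n+1)
  have hrpos : (0:ℝ) < r := lt_of_lt_of_le (cf_den_pos hα (n+1)) hr1
  have hrpos' : (0:ℝ) < r' := lt_of_lt_of_le (cf_den_pos hα (n+2)) hr1'
  set s : ℝ := (-1)^n with hs_def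
  have hss : |s| = 1 := by rw [hs_def, abs_pow, abs_neg, abs_one, one_pow]
  have hen : (GenContFract.of α).dens n * α - (GenContFract.of α).nums n = s / r := hr3
  have hen1 : (GenContFract.of α).dens (n+1) * α - (GenContFract.of α).nums (n+1)
      = -s / r' := by rw [hr3']; rw [hs_def]; ring_nf
  have habs_en : |s / r| = 1 / r := by
    rw [abs_div, hss, abs_of_pos hrpos]
  have hsum : (q:ℝ) * α - (p:ℝ) = (x:ℝ) * (s / r) + (y:ℝ) * (-s / r') := by
    have hq' : (q:ℝ) = (x:ℝ) * (Qn:ℝ) + (y:ℝ) * (Qn1:ℝ) := by exact_mod_cast hx.symm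
    have hp' : (p:ℝ) = (x:ℝ) * (Pn:ℝ) + (y:ℝ) * (Pn1:ℝ) := by exact_mod_cast hy.symm
    rw [hq', hp', ← hen, ← hen1, ← hQn, ← hQn1, ← hPn, ← hPn1]
    ring
  rw [hen, habs_en, hsum]
  rcases eq_or_ne y 0 with hy0 | hy0
  · -- q = x * Qn, x ≠ 0
    have hx0 : x ≠ 0 := by
      intro h
      rw [h, hy0] at hx; simp at hx; omega
    have hx1 : (1:ℝ) ≤ |(x:ℝ)| := by
      rw [← Int.cast_abs]; exact_mod_cast Int.one_le_abs hx0
    rw [hy0]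
    push_cast
    rw [zero_mul, add_zero, abs_mul, habs_en]
    nlinarith [one_div_pos.mpr hrpos]
  · rcases eq_or_ne x 0 with hx0 | hx0
    · exfalso
      rw [hx0] at hx; simp at hx
      rcases le_or_gt 1 y with h1 | h1
      · nlinarith
      · have : y ≤ -1 := by omega
        nlinarith
    · -- both nonzero
      rcases lt_trichotomy x 0 with hxneg | hx0' | hxpos
      · rcases lt_trichotomy y 0 with hyneg | hy0' | hypos
        · exfalso
          have h1 : x ≤ -1 := by omega
          have h2 : y ≤ -1 := by omega
          nlinarith
        · exact absurd hy0' hy0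
        · -- x ≤ -1, y ≥ 1
          have h1 : (x:ℝ) ≤ -1 := by exact_mod_cast (by omega : x ≤ -1)
          have h2 : (1:ℝ) ≤ (y:ℝ) := by exact_mod_cast (by omega : 1 ≤ y)
          have hval : (x:ℝ) * (s / r) + (y:ℝ) * (-s / r') = ((x:ℝ)/r - (y:ℝ)/r') * s := by
            ring
          rw [hval, abs_mul, hss, mul_one]
          have hneg : (x:ℝ)/r - (y:ℝ)/r' ≤ -(1/r) := by
            have hxa : (x:ℝ)/r ≤ (-1)/r := (div_le_div_iff_of_pos_right hrpos).mpr h1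
            have h2' : 0 < (y:ℝ)/r' := by positivity
            rw [neg_div] at hxa
            linarith
          calc 1/r ≤ -((x:ℝ)/r - (y:ℝ)/r') := by linarith
            _ ≤ |(x:ℝ)/r - (y:ℝ)/r'| := neg_le_abs _
      · exact absurd hx0' hx0
      · rcases lt_trichotomy y 0 with hyneg | hy0' | hypos
        · -- x ≥ 1, y ≤ -1
          have h1 : (1:ℝ) ≤ (x:ℝ) := by exact_mod_cast (by omega : 1 ≤ x)
          have h2 : (y:ℝ) ≤ -1 := by exact_mod_cast (by omega : y ≤ -1)
          have hval : (x:ℝ) * (s / r) + (y:ℝ) * (-s / r') = ((x:ℝ)/r - (y:ℝ)/r') * s := by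
            ring
          rw [hval, abs_mul, hss, mul_one]
          have hpos : 1/r ≤ (x:ℝ)/r - (y:ℝ)/r' := by
            have ha : 1/r ≤ (x:ℝ)/r := (div_le_div_iff_of_pos_right hrpos).mpr h1
            have hb : (y:ℝ)/r' ≤ (-1)/r' := (div_le_div_iff_of_pos_right hrpos').mpr h2
            have hc : (0:ℝ) < 1/r' := by positivity
            rw [neg_div] at hb
            linarith
          calc 1/r ≤ (x:ℝ)/r - (y:ℝ)/r' := hpos
            _ ≤ |(x:ℝ)/r - (y:ℝ)/r'| := le_abs_self _
        · exact absurd hy0' hy0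
        · exfalso
          have h1 : 1 ≤ x := by omega
          have h2 : 1 ≤ y := by omega
          nlinarith


lemma cf_package (hα : Irrational α) :
    ∃ Q : ℕ → ℕ,
      (∀ n, (Q n : ℝ) = (GenContFract.of α).dens n) ∧
      (∀ n, 1 ≤ Q n) ∧
      Monotone Q ∧
      Tendsto Q atTop atTop ∧
      (∀ n, distNearestInt ((Q n : ℝ) * α) ≤ 1 / (GenContFract.of α).dens (n+1)) ∧
      (∀ n, ∀ q : ℕ, 1 ≤ q → (q:ℝ) < (GenContFract.of α).dens (n+1) →
        1 / (2 * (GenContFract.of α).dens (n+1)) < distNearestInt ((q:ℝ) * α)) := by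
  choose zN hzN using fun n => (cf_int hα n).1
  choose zD hzD using fun n => (cf_int hα n).2
  refine ⟨fun n => (zD n).toNat, ?_, ?_, ?_, ?_, ?_, ?_⟩
  all_goals try skip
  · intro n
    have h1 : (1:ℝ) ≤ (zD n : ℝ) := by rw [← hzD n]; exact cf_one_le_den hα n
    have h2 : (1:ℤ) ≤ zD n := by exact_mod_cast h1
    show ((zD n).toNat : ℝ) = _
    have h3 : ((zD n).toNat : ℝ) = ((zD n : ℤ) : ℝ) := by
      exact_mod_cast congrArg (fun z : ℤ => (z : ℝ)) (Int.toNat_of_nonneg (by omega : (0:ℤ) ≤ zD n))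
    rw [h3, hzD n]
  · intro n
    have h1 : (1:ℝ) ≤ (zD n : ℝ) := by rw [← hzD n]; exact cf_one_le_den hα n
    have h2 : (1:ℤ) ≤ zD n := by exact_mod_cast h1
    show 1 ≤ (zD n).toNat
    omega
  · -- Monotone
    apply monotone_nat_of_le_succ
    intro n
    have h1 : (GenContFract.of α).dens n ≤ (GenContFract.of α).dens (n+1) := of_den_mono
    rw [hzD n, hzD (n+1)] at h1
    have h2 : zD n ≤ zD (n+1) := by exact_mod_cast h1
    show (zD n).toNat ≤ (zD (n+1)).toNat
    omega
  · -- Tendsto atTop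
    apply tendsto_atTop_mono' atTop ?_ (tendsto_id (α := ℕ))
    filter_upwards [eventually_ge_atTop 4] with n hn
    have hfib : (Nat.fib (n+1) : ℝ) ≤ (GenContFract.of α).dens n :=
      succ_nth_fib_le_of_nth_den (Or.inr (cf_not_term hα (n-1)))
    rw [hzD n] at hfib
    have h2 : (Nat.fib (n+1) : ℤ) ≤ zD n := by exact_mod_cast hfib
    have h3 : n + 1 ≤ Nat.fib (n+1) := Nat.le_fib_self (by omega)
    show (id n : ℕ) ≤ (zD n).toNat
    simp only [id]
    omega
  · -- upper bound at q = Q n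
    intro n
    obtain ⟨r, hr1, hr2, hr3⟩ := cf_err hα n
    have hrpos : (0:ℝ) < r := lt_of_lt_of_le (cf_den_pos hα (n+1)) hr1
    have hcast : (((zD n).toNat : ℕ) : ℝ) = (GenContFract.of α).dens n := by
      have h1 : (1:ℝ) ≤ (zD n : ℝ) := by rw [← hzD n]; exact cf_one_le_den hα n
      have h2 : (1:ℤ) ≤ zD n := by exact_mod_cast h1
      have h3 : (((zD n).toNat : ℕ) : ℝ) = ((zD n : ℤ) : ℝ) := by
        exact_mod_cast congrArg (fun z : ℤ => (z : ℝ)) (Int.toNat_of_nonneg (by omega : (0:ℤ) ≤ zD n))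
      rw [h3, hzD n]
    calc distNearestInt (((zD n).toNat : ℕ) * α)
        ≤ |(((zD n).toNat : ℕ) : ℝ) * α - (zN n : ℝ)| := round_le _ (zN n)
      _ = |(GenContFract.of α).dens n * α - (GenContFract.of α).nums n| := by
          rw [hcast, hzN n]
      _ = 1 / r := by rw [hr3, abs_div, abs_pow, abs_neg, abs_one, one_pow, abs_of_pos hrpos]
      _ ≤ 1 / (GenContFract.of α).dens (n+1) :=
          one_div_le_one_div_of_le (cf_den_pos hα (n+1)) hr1
  · -- lower bound for all 1 ≤ q < dens (n+1)
    intro n q hq1 hq2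
    obtain ⟨r, hr1, hr2, hr3⟩ := cf_err hα n
    have hrpos : (0:ℝ) < r := lt_of_lt_of_le (cf_den_pos hα (n+1)) hr1
    have hmono : (GenContFract.of α).dens n ≤ (GenContFract.of α).dens (n+1) := of_den_mono
    have hd1pos : (0:ℝ) < (GenContFract.of α).dens (n+1) := cf_den_pos hα (n+1)
    have hbest := cf_best hα n (q : ℤ) (round ((q:ℝ) * α)) (by exact_mod_cast hq1)
      (by push_cast; exact hq2)
    have habs : |(GenContFract.of α).dens n * α - (GenContFract.of α).nums n| = 1 / r := by
      rw [hr3, abs_div, abs_pow, abs_neg, abs_one, one_pow, abs_of_pos hrpos]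
    have hlt : 1 / (2 * (GenContFract.of α).dens (n+1)) < 1 / r := by
      apply one_div_lt_one_div_of_lt hrpos
      linarith
    calc 1 / (2 * (GenContFract.of α).dens (n+1)) < 1 / r := hlt
      _ = |(GenContFract.of α).dens n * α - (GenContFract.of α).nums n| := habs.symm
      _ ≤ |((q:ℤ):ℝ) * α - (round ((q:ℝ) * α) : ℝ)| := hbest
      _ = distNearestInt ((q:ℝ) * α) := by
          show _ = |(q:ℝ) * α - (round ((q:ℝ) * α) : ℝ)|
          push_cast
          ring_nf


end CFFacts

section Helpers

/-- liminf of a nonneg real sequence (in `EReal`) is zero if it is frequently small. -/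
lemma ereal_liminf_zero {f : ℕ → ℝ} (h0 : ∀ q, 0 ≤ f q)
    (h : ∀ ε : ℝ, 0 < ε → ∃ᶠ q in atTop, f q < ε) :
    liminf (fun q => ((f q : ℝ) : EReal)) atTop = 0 := by
  apply le_antisymm
  · apply le_of_forall_gt_imp_ge_of_dense
    intro c hc
    obtain ⟨ε, hε0, hεc⟩ := EReal.exists_between_coe_real hc
    refine le_trans (liminf_le_of_frequently_le' ?_) hεc.le
    exact (h ε (by exact_mod_cast hε0)).mono fun q hq => by exact_mod_cast hq.le
  · exact le_liminf_of_le (by isBoundedDefault)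
      (Eventually.of_forall fun q => by exact_mod_cast h0 q)

lemma ereal_freq_small {f : ℕ → ℝ}
    (h : liminf (fun q => ((f q : ℝ) : EReal)) atTop = 0) {ε : ℝ} (hε : 0 < ε) :
    ∃ᶠ q in atTop, f q < ε := by
  have h2 : liminf (fun q => ((f q : ℝ) : EReal)) atTop < (ε : EReal) := by
    rw [h]; exact_mod_cast hε
  exact (frequently_lt_of_liminf_lt (by isBoundedDefault) h2).mono fun q hq => by exact_mod_cast hq

/-- Locate `q` between consecutive values of a monotone sequence tending to infinity. -/
lemma locate {Q : ℕ → ℕ} (hQmono : Monotone Q) (hQtend : Tendsto Q atTop atTop)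
    (q N : ℕ) (hq : Q N ≤ q) : ∃ n, N ≤ n ∧ Q n ≤ q ∧ q < Q (n + 1) := by
  have hex : ∃ m, q < Q m := (hQtend.eventually_gt_atTop q).exists
  have hm0pos : Nat.find hex ≠ 0 := by
    intro h
    have h2 : q < Q 0 := h ▸ Nat.find_spec hex
    have h3 : Q 0 ≤ Q N := hQmono (Nat.zero_le N)
    omega
  obtain ⟨n, hn⟩ : ∃ n, Nat.find hex = n + 1 := ⟨Nat.find hex - 1, by omega⟩
  refine ⟨n, ?_, ?_, ?_⟩
  · by_contra hcon
    push_neg at hcon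
    have h2 : Q (n+1) ≤ Q N := hQmono (by omega)
    have h3 : q < Q (n+1) := hn ▸ Nat.find_spec hex
    omega
  · exact not_lt.mp (Nat.find_min hex (by omega))
  · exact hn ▸ Nat.find_spec hex

lemma mono_aux {l a b : ℝ} (ha : 0 < a) (hab : a ≤ b) (h1 : 1 ≤ a * Real.log l) :
    a * Real.log l - Real.log a ≤ b * Real.log l - Real.log b := by
  have hb : 0 < b := lt_of_lt_of_le ha hab
  have h2 : Real.log b - Real.log a = Real.log (b / a) := (Real.log_div hb.ne' ha.ne').symm
  have h3 : Real.log (b / a) ≤ b / a - 1 := Real.log_le_sub_one_of_pos (by positivity)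
  have h4 : b / a - 1 = (b - a) / a := by field_simp
  have h5 : (b - a) / a ≤ (b - a) * Real.log l := by
    rw [div_le_iff₀ ha]
    nlinarith [sub_nonneg.mpr hab]
  nlinarith

end Helpers

/-- For irrational `α` with convergent denominators `q_n`:
`μ(α) = 1 + limsup (log q_{n+1})/(log q_n)` and `log θ(α) = limsup (log q_{n+1})/q_n`,
as equalities in the extended reals. -/
theorem irrationality_measures_via_denominators (α : ℝ) (hα : Irrational α) :
    irrationalityExponent α =
      1 + limsup (fun n : ℕ =>
        ((Real.log (cfDen α (n + 1)) / Real.log (cfDen α n) : ℝ) : EReal)) atTop ∧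
    ENNReal.log (irrationalityBase α) =
      limsup (fun n : ℕ => ((Real.log (cfDen α (n + 1)) / cfDen α n : ℝ) : EReal)) atTop := by
  obtain ⟨Q, hQr', hQ1, hQmono, hQtend, hupper', hlower'⟩ := cf_package hα
  have hQr : ∀ n, (Q n : ℝ) = cfDen α n := hQr'
  have hupper : ∀ n, distNearestInt ((Q n : ℝ) * α) ≤ 1 / cfDen α (n + 1) := hupper'
  have hlower : ∀ n, ∀ q : ℕ, 1 ≤ q → (q : ℝ) < cfDen α (n + 1) →
      1 / (2 * cfDen α (n + 1)) < distNearestInt ((q : ℝ) * α) := hlower'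
  have hd1 : ∀ n, (1 : ℝ) ≤ cfDen α n := fun n => cf_one_le_den hα n
  have hdpos : ∀ n, (0 : ℝ) < cfDen α n := fun n => cf_den_pos hα n
  have hdmono : Monotone (cfDen α) :=
    monotone_nat_of_le_succ fun n => GenContFract.of_den_mono
  have hdtend : Tendsto (cfDen α) atTop atTop := by
    have h1 : Tendsto (fun n => ((Q n : ℕ) : ℝ)) atTop atTop :=
      tendsto_natCast_atTop_atTop.comp hQtend
    exact h1.congr fun n => hQr n
  constructor
  · -- Part A : irrationality exponent
    set L := limsup (fun n : ℕ =>
      ((Real.log (cfDen α (n + 1)) / Real.log (cfDen α n) : ℝ) : EReal)) atTop with hLdef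
    have hL1 : (1 : EReal) ≤ L := by
      refine le_limsup_of_frequently_le (Eventually.frequently ?_) (by isBoundedDefault)
      filter_upwards [hdtend.eventually_ge_atTop 2] with n hn
      have h2 : (0 : ℝ) < Real.log (cfDen α n) := Real.log_pos (by linarith)
      have h3 : Real.log (cfDen α n) ≤ Real.log (cfDen α (n + 1)) :=
        Real.log_le_log (by linarith) (hdmono (Nat.le_succ n))
      have h4 : (1 : ℝ) ≤ Real.log (cfDen α (n + 1)) / Real.log (cfDen α n) :=
        (one_le_div h2).mpr h3
      exact_mod_cast h4
    -- membership of every ν with ν < 1 + L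
    have hmem : ∀ ν : ℝ, (ν : EReal) < 1 + L → liminf (fun q : ℕ =>
        (((q : ℝ) ^ (ν - 1) * distNearestInt (q * α) : ℝ) : EReal)) atTop = 0 := by
      intro ν hν
      have hνL : ((ν - 1 : ℝ) : EReal) < L := by
        by_contra hcon
        push_neg at hcon
        have h1 := add_le_add_right hcon (1 : EReal)
        have h2 : (1 : EReal) + ((ν - 1 : ℝ) : EReal) = (ν : EReal) := by
          rw [← EReal.coe_one, ← EReal.coe_add]; norm_num
        rw [h2] at h1
        exact absurd (hν.trans_le h1) (lt_irrefl _)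
      obtain ⟨c, hc1, hc2⟩ := EReal.exists_between_coe_real hνL
      have hc1' : ν - 1 < c := by exact_mod_cast hc1
      apply ereal_liminf_zero
      · intro q
        exact mul_nonneg (Real.rpow_nonneg (Nat.cast_nonneg q) _)
          (abs_nonneg _)
      · intro ε hε
        rw [frequently_atTop]
        intro N
        have hfreq : ∃ᶠ n in atTop, (c : EReal) <
            ((Real.log (cfDen α (n + 1)) / Real.log (cfDen α n) : ℝ) : EReal) :=
          frequently_lt_of_lt_limsup (by isBoundedDefault) hc2
        have hev : ∀ᶠ n in atTop,
            ((2:ℝ) ≤ cfDen α n ∧ cfDen α n ^ (ν - 1 - c) < ε ∧ N ≤ Q n) := by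
          have e2 : Tendsto (fun n => cfDen α n ^ (ν - 1 - c)) atTop (nhds 0) := by
            have h5 := (tendsto_rpow_neg_atTop (by linarith : 0 < c - (ν - 1))).comp hdtend
            have h6 : (fun n => cfDen α n ^ (-(c - (ν - 1)))) =
                fun n => cfDen α n ^ (ν - 1 - c) := by
              funext n; congr 1; ring
            rwa [← h6]
          have e2' : ∀ᶠ n in atTop, cfDen α n ^ (ν - 1 - c) < ε :=
            e2.eventually (eventually_lt_nhds hε) |>.mono (fun _ h => h)
          filter_upwards [hdtend.eventually_ge_atTop 2, e2', hQtend.eventually_ge_atTop N]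
            with n h1 h2 h3
          exact ⟨h1, h2, h3⟩
        obtain ⟨n, hcn, h2n, hεn, hNn⟩ := (hfreq.and_eventually hev).exists
        refine ⟨Q n, hNn, ?_⟩
        have hcr : c < Real.log (cfDen α (n + 1)) / Real.log (cfDen α n) := by
          exact_mod_cast hcn
        have hlogpos : 0 < Real.log (cfDen α n) := Real.log_pos (by linarith)
        have hlt : c * Real.log (cfDen α n) < Real.log (cfDen α (n + 1)) :=
          (lt_div_iff₀ hlogpos).mp hcr
        have hdn1 : cfDen α n ^ c < cfDen α (n + 1) := by
          rw [Real.rpow_def_of_pos (hdpos n)]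
          calc Real.exp (Real.log (cfDen α n) * c)
              = Real.exp (c * Real.log (cfDen α n)) := by rw [mul_comm]
            _ < Real.exp (Real.log (cfDen α (n + 1))) := Real.exp_lt_exp.mpr hlt
            _ = cfDen α (n + 1) := Real.exp_log (hdpos (n + 1))
        have hrnn : (0:ℝ) ≤ (Q n : ℝ) ^ (ν - 1) := Real.rpow_nonneg (Nat.cast_nonneg _) _
        calc ((Q n : ℕ) : ℝ) ^ (ν - 1) * distNearestInt ((Q n : ℕ) * α)
            ≤ ((Q n : ℕ) : ℝ) ^ (ν - 1) * (1 / cfDen α (n + 1)) :=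
              mul_le_mul_of_nonneg_left (hupper n) hrnn
          _ = cfDen α n ^ (ν - 1) / cfDen α (n + 1) := by
              rw [hQr n, mul_one_div]
          _ < cfDen α n ^ (ν - 1) / cfDen α n ^ c := by
              apply div_lt_div_of_pos_left (Real.rpow_pos_of_pos (hdpos n) _)
                (Real.rpow_pos_of_pos (hdpos n) _) hdn1
          _ = cfDen α n ^ (ν - 1 - c) := (Real.rpow_sub (hdpos n) _ _).symm
          _ < ε := hεn
    -- ≥ direction
    have hge : 1 + L ≤ irrationalityExponent α := by
      apply le_of_forall_lt
      intro c hc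
      obtain ⟨ν, hν1, hν2⟩ := EReal.exists_between_coe_real hc
      exact lt_of_lt_of_le hν1 (le_sSup ⟨ν, hmem ν hν2, rfl⟩)
    -- ≤ direction
    have hle : irrationalityExponent α ≤ 1 + L := by
      apply sSup_le
      rintro x ⟨ν, hν, rfl⟩
      simp only [Set.mem_setOf_eq] at hν
      rcases le_or_gt ν 2 with hν2 | hν2
      · calc ((ν : ℝ) : EReal) ≤ ((1 + 1 : ℝ) : EReal) := EReal.coe_le_coe_iff.mpr (by linarith)
          _ = 1 + (1 : EReal) := by rw [EReal.coe_add, EReal.coe_one]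
          _ ≤ 1 + L := add_le_add_right hL1 1
      · have hkey : ∀ c : ℝ, c < ν - 1 → (c : EReal) ≤ L := by
          intro c hc
          have hεpos : 0 < ν - 1 - c := by linarith
          refine le_limsup_of_frequently_le ?_ (by isBoundedDefault)
          rw [frequently_atTop]
          intro N
          have hev : ∀ᶠ m in atTop,
              (Real.log 2 / (ν - 1 - c) ≤ Real.log (cfDen α m) ∧ (2:ℝ) ≤ cfDen α m) := by
            filter_upwards [(Real.tendsto_log_atTop.comp hdtend).eventually_ge_atTop
              (Real.log 2 / (ν - 1 - c)), hdtend.eventually_ge_atTop 2] with m h1 h2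
            exact ⟨h1, h2⟩
          obtain ⟨a, ha⟩ := eventually_atTop.mp hev
          set M := max a N with hM
          have hfreq := ereal_freq_small hν one_pos
          rw [frequently_atTop] at hfreq
          obtain ⟨q, hqge, hqlt⟩ := hfreq (Q M)
          obtain ⟨n, hnM, hQnq, hqQn1⟩ := locate hQmono hQtend q M hqge
          obtain ⟨hlog2, hdn2⟩ := ha n (le_trans (le_max_left a N) hnM)
          have hq1 : 1 ≤ q := le_trans (hQ1 M) hqge
          have hlogpos : 0 < Real.log (cfDen α n) := Real.log_pos (by linarith)
          have hqd : (q : ℝ) < cfDen α (n + 1) := by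
            rw [← hQr (n + 1)]; exact_mod_cast hqQn1
          have hlow := hlower n q hq1 hqd
          have hqpos : (0 : ℝ) < (q : ℝ) := by exact_mod_cast hq1
          have hrpowpos : (0 : ℝ) < (q : ℝ) ^ (ν - 1) := Real.rpow_pos_of_pos hqpos _
          have h5 : (q : ℝ) ^ (ν - 1) * (1 / (2 * cfDen α (n + 1))) < 1 :=
            lt_trans (mul_lt_mul_of_pos_left hlow hrpowpos) hqlt
          have h2d : (0 : ℝ) < 2 * cfDen α (n + 1) := by
            have := hdpos (n + 1); linarith
          have h6 : (q : ℝ) ^ (ν - 1) < 2 * cfDen α (n + 1) := by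
            rw [mul_one_div, div_lt_one h2d] at h5; exact h5
          have hdq : cfDen α n ≤ (q : ℝ) := by
            rw [← hQr n]; exact_mod_cast hQnq
          have h7 : cfDen α n ^ (ν - 1) < 2 * cfDen α (n + 1) :=
            lt_of_le_of_lt (Real.rpow_le_rpow (hdpos n).le hdq (by linarith)) h6
          have h8 : (ν - 1) * Real.log (cfDen α n) < Real.log 2 + Real.log (cfDen α (n + 1)) := by
            have h9 := Real.log_lt_log (Real.rpow_pos_of_pos (hdpos n) _) h7
            rwa [Real.log_rpow (hdpos n), Real.log_mul two_ne_zero (hdpos (n + 1)).ne'] at h9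
          have h10 : Real.log 2 ≤ (ν - 1 - c) * Real.log (cfDen α n) := by
            rw [div_le_iff₀ hεpos] at hlog2
            linarith [mul_comm (Real.log (cfDen α n)) (ν - 1 - c)]
          have h11 : c ≤ Real.log (cfDen α (n + 1)) / Real.log (cfDen α n) := by
            rw [le_div_iff₀ hlogpos]
            nlinarith
          exact ⟨n, le_trans (le_max_right a N) hnM, by exact_mod_cast h11⟩
        have hν1L : ((ν - 1 : ℝ) : EReal) ≤ L := by
          by_contra hcon
          push_neg at hcon
          obtain ⟨c, hcL, hcν⟩ := EReal.exists_between_coe_real hcon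
          exact absurd hcL (not_lt.mpr (hkey c (by exact_mod_cast hcν)))
        calc ((ν : ℝ) : EReal) = 1 + ((ν - 1 : ℝ) : EReal) := by
              rw [← EReal.coe_one, ← EReal.coe_add]; norm_num
          _ ≤ 1 + L := add_le_add_right hν1L 1
    exact le_antisymm hle hge
  · -- Part B : irrationality base
    set S := limsup (fun n : ℕ =>
      ((Real.log (cfDen α (n + 1)) / cfDen α n : ℝ) : EReal)) atTop with hSdef
    have hS0 : (0 : EReal) ≤ S := by
      refine le_limsup_of_frequently_le (Eventually.frequently ?_) (by isBoundedDefault)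
      refine Eventually.of_forall fun n => ?_
      have h1 : (0 : ℝ) ≤ Real.log (cfDen α (n + 1)) / cfDen α n :=
        div_nonneg (Real.log_nonneg (hd1 (n + 1))) (hdpos n).le
      exact_mod_cast h1
    have hbase1 : (1 : ℝ≥0∞) ≤ irrationalityBase α := by
      apply le_sSup
      refine ⟨1, ⟨le_refl 1, ?_⟩, by simp⟩
      apply ereal_liminf_zero
      · intro q
        apply div_nonneg _ (Nat.cast_nonneg q)
        exact mul_nonneg (by positivity) (abs_nonneg _)
      · intro ε hε
        apply Eventually.frequently
        filter_upwards [eventually_gt_atTop (max 1 ⌈1 / ε⌉₊)] with q hq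
        have hq1 : 1 ≤ q := le_of_lt (lt_of_le_of_lt (le_max_left _ _) hq)
        have hqpos : (0 : ℝ) < (q : ℝ) := by exact_mod_cast hq1
        have hqε : 1 / ε < (q : ℝ) := by
          calc 1 / ε ≤ (⌈1 / ε⌉₊ : ℝ) := Nat.le_ceil _
            _ < (q : ℝ) := by exact_mod_cast lt_of_le_of_lt (le_max_right _ _) hq
        have hdist : distNearestInt ((q : ℝ) * α) ≤ 1 / 2 := abs_sub_round _
        have hεq : 1 < ε * q := by
          rw [div_lt_iff₀ hε] at hqε
          calc (1:ℝ) < ε * ((q:ℝ)) := by linarith [mul_comm (q:ℝ) ε]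
            _ = ε * q := rfl
        calc (1 : ℝ) ^ q * distNearestInt ((q : ℝ) * α) / (q : ℝ)
            = distNearestInt ((q : ℝ) * α) / (q : ℝ) := by rw [one_pow, one_mul]
          _ ≤ (1 / 2) / (q : ℝ) := by gcongr
          _ < ε := by
              rw [div_lt_iff₀ hqpos]
              nlinarith
    have hlogθ0 : (0 : EReal) ≤ ENNReal.log (irrationalityBase α) := by
      rw [← ENNReal.log_one]
      exact ENNReal.log_monotone hbase1
    apply le_antisymm
    · -- log θ ≤ S
      have hmap : ENNReal.log (irrationalityBase α) =
          ⨆ x ∈ (ENNReal.ofReal '' {l : ℝ | 1 ≤ l ∧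
            liminf (fun q : ℕ =>
              ((l ^ q * distNearestInt (q * α) / q : ℝ) : EReal)) atTop = 0}),
            ENNReal.log x := by
        rw [irrationalityBase, ← ENNReal.logOrderIso_apply, OrderIso.map_sSup]
        simp only [ENNReal.logOrderIso_apply]
      rw [hmap]
      apply iSup₂_le
      rintro x ⟨l, ⟨hl1, hl2⟩, rfl⟩
      have hlpos : (0 : ℝ) < l := by linarith
      rw [ENNReal.log_ofReal_of_pos hlpos]
      rcases eq_or_lt_of_le hl1 with heq | hl1'
      · rw [← heq, Real.log_one]
        exact_mod_cast hS0
      · -- l > 1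
        have hkeyB : ∀ c : ℝ, c < Real.log l → (c : EReal) ≤ S := by
          intro c hc
          set δ := Real.log l - c with hδdef
          have hδpos : 0 < δ := by rw [hδdef]; linarith
          refine le_limsup_of_frequently_le ?_ (by isBoundedDefault)
          rw [frequently_atTop]
          intro N
          have hloglpos : 0 < Real.log l := Real.log_pos hl1'
          have hev : ∀ᶠ m in atTop,
              ((Real.log 2 + Real.log (cfDen α m)) / cfDen α m ≤ δ ∧
                1 ≤ cfDen α m * Real.log l) := by
            have t1 : Tendsto (fun x : ℝ => (Real.log 2 + Real.log x) / x) atTop (nhds 0) := by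
              have a1 : Tendsto (fun x : ℝ => Real.log 2 / x) atTop (nhds 0) :=
                tendsto_const_nhds.div_atTop tendsto_id
              have a2 : Tendsto (fun x : ℝ => Real.log x / x) atTop (nhds 0) :=
                Real.isLittleO_log_id_atTop.tendsto_div_nhds_zero
              have := a1.add a2
              simp only [add_zero] at this
              refine this.congr fun x => ?_
              rw [add_div]
            have t2 := t1.comp hdtend
            have e1 : ∀ᶠ m in atTop, (Real.log 2 + Real.log (cfDen α m)) / cfDen α m < δ :=
              t2.eventually (eventually_lt_nhds hδpos)
            have t3 : Tendsto (fun m => cfDen α m * Real.log l) atTop atTop :=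
              hdtend.atTop_mul_const hloglpos
            filter_upwards [e1, t3.eventually_ge_atTop 1] with m h1 h2
            exact ⟨h1.le, h2⟩
          obtain ⟨a, ha⟩ := eventually_atTop.mp hev
          set M := max a N with hM
          have hfreq := ereal_freq_small hl2 one_pos
          rw [frequently_atTop] at hfreq
          obtain ⟨q, hqge, hqlt⟩ := hfreq (Q M)
          obtain ⟨n, hnM, hQnq, hqQn1⟩ := locate hQmono hQtend q M hqge
          obtain ⟨hδn, hln⟩ := ha n (le_trans (le_max_left a N) hnM)
          have hq1 : 1 ≤ q := le_trans (hQ1 M) hqge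
          have hqpos : (0 : ℝ) < (q : ℝ) := by exact_mod_cast hq1
          have hqd : (q : ℝ) < cfDen α (n + 1) := by
            rw [← hQr (n + 1)]; exact_mod_cast hqQn1
          have hlow := hlower n q hq1 hqd
          have hlqpos : (0 : ℝ) < l ^ q := by positivity
          have h5 : l ^ q * (1 / (2 * cfDen α (n + 1))) / (q : ℝ) < 1 := by
            calc l ^ q * (1 / (2 * cfDen α (n + 1))) / (q : ℝ)
                < l ^ q * distNearestInt ((q : ℝ) * α) / (q : ℝ) := by gcongr
              _ < 1 := hqlt
          have h2dq : (0 : ℝ) < 2 * cfDen α (n + 1) * q := by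
            have := hdpos (n + 1); positivity
          have h6 : l ^ q < 2 * cfDen α (n + 1) * q := by
            rw [mul_one_div, div_div, div_lt_one (by positivity)] at h5
            exact h5
          have h8 : (q : ℝ) * Real.log l < Real.log 2 + Real.log (cfDen α (n + 1)) +
              Real.log (q : ℝ) := by
            have h9 := Real.log_lt_log hlqpos h6
            rwa [Real.log_pow, Real.log_mul (mul_pos two_pos (hdpos (n + 1))).ne' hqpos.ne',
              Real.log_mul two_ne_zero (hdpos (n + 1)).ne'] at h9
          have hdq : cfDen α n ≤ (q : ℝ) := by
            rw [← hQr n]; exact_mod_cast hQnq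
          have hmono2 : cfDen α n * Real.log l - Real.log (cfDen α n) ≤
              (q : ℝ) * Real.log l - Real.log (q : ℝ) :=
            mono_aux (hdpos n) hdq hln
          have h10 : cfDen α n * Real.log l - Real.log (cfDen α n) - Real.log 2 <
              Real.log (cfDen α (n + 1)) := by linarith
          have h11 : c ≤ Real.log (cfDen α (n + 1)) / cfDen α n := by
            rw [le_div_iff₀ (hdpos n)]
            have h12 : Real.log 2 + Real.log (cfDen α n) ≤ δ * cfDen α n := by
              rw [div_le_iff₀ (hdpos n)] at hδn
              linarith
            have h13 : c * cfDen α n = Real.log l * cfDen α n - δ * cfDen α n := by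
              rw [hδdef]; ring
            nlinarith
          exact ⟨n, le_trans (le_max_right a N) hnM, by exact_mod_cast h11⟩
        have hlS : ((Real.log l : ℝ) : EReal) ≤ S := by
          by_contra hcon
          push_neg at hcon
          obtain ⟨c, hcS, hcl⟩ := EReal.exists_between_coe_real hcon
          exact absurd hcS (not_lt.mpr (hkeyB c (by exact_mod_cast hcl)))
        exact hlS
    · -- S ≤ log θ
      apply le_of_forall_lt
      intro x hx
      rcases lt_or_ge x 0 with hx0 | hx0
      · exact lt_of_lt_of_le hx0 hlogθ0
      · obtain ⟨c, hc1, hc2⟩ := EReal.exists_between_coe_real hx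
        have hcpos : 0 < c := by
          have : (0 : EReal) < (c : EReal) := lt_of_le_of_lt hx0 hc1
          exact_mod_cast this
        set lam := Real.exp c with hlam
        have hlam1 : 1 < lam := by
          rw [hlam]
          exact Real.one_lt_exp_iff.mpr hcpos
        have hmemB : liminf (fun q : ℕ =>
            ((lam ^ q * distNearestInt (q * α) / q : ℝ) : EReal)) atTop = 0 := by
          apply ereal_liminf_zero
          · intro q
            apply div_nonneg _ (Nat.cast_nonneg q)
            exact mul_nonneg (by positivity) (abs_nonneg _)
          · intro ε hε
            rw [frequently_atTop]
            intro N
            have hfreq : ∃ᶠ n in atTop, (c : EReal) <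
                ((Real.log (cfDen α (n + 1)) / cfDen α n : ℝ) : EReal) :=
              frequently_lt_of_lt_limsup (by isBoundedDefault) hc2
            have hev : ∀ᶠ n in atTop, (N ≤ Q n ∧ 1 / ε < (Q n : ℝ)) := by
              have t1 : Tendsto (fun n => ((Q n : ℕ) : ℝ)) atTop atTop :=
                tendsto_natCast_atTop_atTop.comp hQtend
              filter_upwards [hQtend.eventually_ge_atTop N, t1.eventually_gt_atTop (1 / ε)]
                with n h1 h2
              exact ⟨h1, h2⟩
            obtain ⟨n, hcn, hNn, hεn⟩ := (hfreq.and_eventually hev).exists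
            refine ⟨Q n, hNn, ?_⟩
            have hcr : c < Real.log (cfDen α (n + 1)) / cfDen α n := by exact_mod_cast hcn
            have h3 : c * cfDen α n < Real.log (cfDen α (n + 1)) :=
              (lt_div_iff₀ (hdpos n)).mp hcr
            have hQnpos : (0 : ℝ) < (Q n : ℝ) := by
              have := hQ1 n; exact_mod_cast this
            have h4 : lam ^ (Q n) < cfDen α (n + 1) := by
              have h5 : lam ^ (Q n) = Real.exp (((Q n : ℕ) : ℝ) * c) :=
                (Real.exp_nat_mul c (Q n)).symm
              rw [h5, ← Real.exp_log (hdpos (n + 1))]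
              apply Real.exp_lt_exp.mpr
              rw [← hQr n] at h3
              linarith [mul_comm ((Q n : ℕ) : ℝ) c]
            have hlampow : (0 : ℝ) < lam ^ (Q n) := by positivity
            calc lam ^ (Q n) * distNearestInt (((Q n : ℕ) : ℝ) * α) / ((Q n : ℕ) : ℝ)
                ≤ lam ^ (Q n) * (1 / cfDen α (n + 1)) / ((Q n : ℕ) : ℝ) :=
                  (div_le_div_iff_of_pos_right hQnpos).mpr
                    (mul_le_mul_of_nonneg_left (hupper n) hlampow.le)
              _ < lam ^ (Q n) * (1 / lam ^ (Q n)) / ((Q n : ℕ) : ℝ) :=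
                  (div_lt_div_iff_of_pos_right hQnpos).mpr
                    (mul_lt_mul_of_pos_left (one_div_lt_one_div_of_lt hlampow h4) hlampow)
              _ = 1 / ((Q n : ℕ) : ℝ) := by field_simp
              _ < ε := by
                  rw [div_lt_iff₀ hQnpos, ← div_lt_iff₀' hε]
                  exact hεn
        have hθ : ENNReal.ofReal lam ≤ irrationalityBase α :=
          le_sSup ⟨lam, ⟨hlam1.le, hmemB⟩, rfl⟩
        calc x < (c : EReal) := hc1
          _ = ENNReal.log (ENNReal.ofReal lam) := by
              rw [show ENNReal.ofReal lam = ENNReal.ofReal (Real.exp c) from by rw [hlam],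
                ENNReal.log_ofReal_of_pos (Real.exp_pos c), Real.log_exp]
          _ ≤ ENNReal.log (irrationalityBase α) := ENNReal.log_monotone hθ
end

section
/- Let α₀ > 0 be irrational. If the irrationality base satisfies θ(α₀) < Δ(α₀) (as extended reals), then Δ is differentiable at α₀ with Δ′(α₀) = 0. -/
open Filter
open scoped ENNReal

-- Auxiliary development ------------------------------------------------

noncomputable def ceilG (α x : ℝ) : ℝ := ∑' N : ℕ, (⌈α * (N : ℝ)⌉ : ℝ) * x ^ N

lemma abs_ceil_le (y : ℝ) : |(⌈y⌉ : ℝ)| ≤ |y| + 1 := by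
  rw [abs_le]
  constructor
  · have := Int.le_ceil y
    have : -|y| ≤ y := neg_abs_le y
    nlinarith [Int.le_ceil y, neg_abs_le y]
  · nlinarith [Int.ceil_lt_add_one y, le_abs_self y]

lemma abs_ceil_sub_ceil (a b : ℝ) : |((⌈a⌉ : ℝ) - (⌈b⌉ : ℝ))| ≤ |a - b| + 1 := by
  rw [abs_le]
  constructor
  · nlinarith [Int.le_ceil a, Int.ceil_lt_add_one b, neg_abs_le (a - b)]
  · nlinarith [Int.le_ceil b, Int.ceil_lt_add_one a, le_abs_self (a - b)]

lemma summable_add_one_mul_geom {x : ℝ} (hx0 : 0 ≤ x) (hx1 : x < 1) :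
    Summable (fun N : ℕ => ((N : ℝ) + 1) * x ^ N) := by
  have h1 : Summable (fun N : ℕ => (N : ℝ) * x ^ N) := by
    have := summable_pow_mul_geometric_of_norm_lt_one (R := ℝ) 1 (r := x)
      (by rwa [Real.norm_eq_abs, abs_of_nonneg hx0])
    simpa using this
  have h2 : Summable (fun N : ℕ => x ^ N) := summable_geometric_of_lt_one hx0 hx1
  simpa [add_mul] using h1.add h2

lemma tsum_add_one_mul_geom {x : ℝ} (hx0 : 0 ≤ x) (hx1 : x < 1) :
    ∑' N : ℕ, ((N : ℝ) + 1) * x ^ N = (1 - x)⁻¹ ^ 2 := by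
  have hn : ‖x‖ < 1 := by rwa [Real.norm_eq_abs, abs_of_nonneg hx0]
  have h1 : Summable (fun N : ℕ => (N : ℝ) * x ^ N) := by
    have := summable_pow_mul_geometric_of_norm_lt_one (R := ℝ) 1 (r := x) hn
    simpa using this
  have h2 : Summable (fun N : ℕ => x ^ N) := summable_geometric_of_lt_one hx0 hx1
  have e1 : ∑' N : ℕ, (N : ℝ) * x ^ N = x / (1 - x) ^ 2 :=
    tsum_coe_mul_geometric_of_norm_lt_one hn
  have e2 : ∑' N : ℕ, x ^ N = (1 - x)⁻¹ := tsum_geometric_of_lt_one hx0 hx1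
  have hx : (1 : ℝ) - x ≠ 0 := by linarith
  calc ∑' N : ℕ, ((N : ℝ) + 1) * x ^ N
      = ∑' N : ℕ, ((N : ℝ) * x ^ N + x ^ N) := by congr 1; ext N; ring
    _ = x / (1 - x) ^ 2 + (1 - x)⁻¹ := by rw [Summable.tsum_add h1 h2, e1, e2]
    _ = (1 - x)⁻¹ ^ 2 := by field_simp; ring

lemma summable_ceilG (α : ℝ) {x : ℝ} (hx0 : 0 ≤ x) (hx1 : x < 1) :
    Summable (fun N : ℕ => (⌈α * (N : ℝ)⌉ : ℝ) * x ^ N) := by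
  apply Summable.of_norm_bounded (g := fun N : ℕ => (|α| + 1) * (((N : ℝ) + 1) * x ^ N))
  · exact (summable_add_one_mul_geom hx0 hx1).mul_left _
  · intro N
    have h1 : |(⌈α * (N : ℝ)⌉ : ℝ)| ≤ |α * N| + 1 := abs_ceil_le _
    have h2 : |α * (N : ℝ)| ≤ |α| * N := by rw [abs_mul, abs_of_nonneg (Nat.cast_nonneg N : (0:ℝ) ≤ N)]
    have hxN : (0:ℝ) ≤ x ^ N := pow_nonneg hx0 N
    rw [norm_mul, Real.norm_eq_abs, Real.norm_eq_abs, abs_of_nonneg hxN]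
    have hN1 : (1:ℝ) ≤ (N:ℝ) + 1 := by have := Nat.cast_nonneg (α := ℝ) N; linarith
    nlinarith [abs_nonneg α, Nat.cast_nonneg (α := ℝ) N]

/-- The digit `⌈α(n+1)⌉ - ⌈αn⌉`. -/
noncomputable def wrd (α : ℝ) (n : ℕ) : ℤ := ⌈α * ((n : ℝ) + 1)⌉ - ⌈α * (n : ℝ)⌉

lemma summable_wrd (α : ℝ) {x : ℝ} (hx0 : 0 ≤ x) (hx1 : x < 1) :
    Summable (fun n : ℕ => ((wrd α n : ℤ) : ℝ) * x ^ (n + 1)) := by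
  have hA : Summable (fun n : ℕ => (⌈α * ((n : ℝ) + 1)⌉ : ℝ) * x ^ (n + 1)) := by
    have := (summable_nat_add_iff (f := fun N : ℕ => (⌈α * (N : ℝ)⌉ : ℝ) * x ^ N) 1).2
      (summable_ceilG α hx0 hx1)
    refine this.congr fun n => ?_
    push_cast
    ring_nf
  have hB : Summable (fun n : ℕ => (⌈α * (n : ℝ)⌉ : ℝ) * x ^ (n + 1)) := by
    have := (summable_ceilG α hx0 hx1).mul_right x
    refine this.congr fun n => ?_
    rw [pow_succ]; ring
  have := hA.sub hB
  refine this.congr fun n => ?_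
  simp [wrd]
  ring

lemma tsum_wrd (α : ℝ) {x : ℝ} (hx0 : 0 ≤ x) (hx1 : x < 1) :
    ∑' n : ℕ, ((wrd α n : ℤ) : ℝ) * x ^ (n + 1) = (1 - x) * ceilG α x := by
  have hG := summable_ceilG α hx0 hx1
  have hA : Summable (fun n : ℕ => (⌈α * ((n : ℝ) + 1)⌉ : ℝ) * x ^ (n + 1)) := by
    have := (summable_nat_add_iff (f := fun N : ℕ => (⌈α * (N : ℝ)⌉ : ℝ) * x ^ N) 1).2 hG
    refine this.congr fun n => ?_
    push_cast; ring_nf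
  have hB : Summable (fun n : ℕ => (⌈α * (n : ℝ)⌉ : ℝ) * x ^ (n + 1)) := by
    have := hG.mul_right x
    refine this.congr fun n => ?_
    rw [pow_succ]; ring
  have eA : ∑' n : ℕ, (⌈α * ((n : ℝ) + 1)⌉ : ℝ) * x ^ (n + 1) = ceilG α x := by
    have h0 : ceilG α x = (⌈α * ((0:ℕ) : ℝ)⌉ : ℝ) * x ^ (0:ℕ)
        + ∑' n : ℕ, (⌈α * ((n + 1 : ℕ) : ℝ)⌉ : ℝ) * x ^ (n + 1) := Summable.tsum_eq_zero_add hG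
    have hz : (⌈α * ((0:ℕ) : ℝ)⌉ : ℝ) * x ^ (0:ℕ) = 0 := by norm_num
    rw [hz, zero_add] at h0
    rw [h0]
    congr 1; ext n; push_cast; ring_nf
  have eB : ∑' n : ℕ, (⌈α * (n : ℝ)⌉ : ℝ) * x ^ (n + 1) = x * ceilG α x := by
    rw [show (fun n : ℕ => (⌈α * (n : ℝ)⌉ : ℝ) * x ^ (n + 1))
        = (fun n : ℕ => ((⌈α * (n : ℝ)⌉ : ℝ) * x ^ n) * x) by ext n; rw [pow_succ]; ring]
    rw [tsum_mul_right]
    rw [mul_comm]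
    rfl
  calc ∑' n : ℕ, ((wrd α n : ℤ) : ℝ) * x ^ (n + 1)
      = ∑' n : ℕ, ((⌈α * ((n : ℝ) + 1)⌉ : ℝ) * x ^ (n + 1)
          - (⌈α * (n : ℝ)⌉ : ℝ) * x ^ (n + 1)) := by
        congr 1; ext n; simp [wrd]; ring
    _ = ceilG α x - x * ceilG α x := by rw [Summable.tsum_sub hA hB, eA, eB]
    _ = (1 - x) * ceilG α x := by ring

lemma upperWord_eq_wrd (α : ℝ) (n : ℕ) : upperWord α n = wrd α n := by
  have key : ∀ y : ℝ, ⌈(α - ⌈α⌉ + 1) * y⌉ = ⌈α * y - ((⌈α⌉ - 1 : ℤ) : ℝ) * y⌉ := by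
    intro y; congr 1; push_cast; ring
  unfold upperWord wrd
  rw [key, key]
  have k2 : ∀ m : ℤ, ⌈α * ((m : ℤ) : ℝ) - ((⌈α⌉ - 1 : ℤ) : ℝ) * ((m : ℤ) : ℝ)⌉
      = ⌈α * ((m : ℤ) : ℝ)⌉ - (⌈α⌉ - 1) * m := by
    intro m
    rw [show α * ((m : ℤ) : ℝ) - ((⌈α⌉ - 1 : ℤ) : ℝ) * ((m : ℤ) : ℝ)
        = α * ((m : ℤ) : ℝ) - (((⌈α⌉ - 1) * m : ℤ) : ℝ) by push_cast; ring]
    rw [Int.ceil_sub_intCast]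
  have e1 := k2 (n + 1)
  have e2 := k2 n
  push_cast at e1 e2 ⊢
  rw [e1, e2]
  ring

lemma wrd_nonneg {α : ℝ} (hα : 0 ≤ α) (n : ℕ) : 0 ≤ wrd α n := by
  unfold wrd
  have : α * (n : ℝ) ≤ α * ((n : ℝ) + 1) := by nlinarith [Nat.cast_nonneg (α := ℝ) n]
  have := Int.ceil_le_ceil this
  omega
  
lemma wrd_zero (α : ℝ) : wrd α 0 = ⌈α⌉ := by simp [wrd]

/-- Lower bound for the increment of `x ↦ (1-x) * ceilG α x`. -/
lemma hdiff {α x x' : ℝ} (hα : 0 < α) (hx'0 : 0 ≤ x') (hxx : x' ≤ x) (hx1 : x < 1) :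
    x - x' ≤ (1 - x) * ceilG α x - (1 - x') * ceilG α x' := by
  have hx0 : 0 ≤ x := le_trans hx'0 hxx
  have hx'1 : x' < 1 := lt_of_le_of_lt hxx hx1
  rw [← tsum_wrd α hx0 hx1, ← tsum_wrd α hx'0 hx'1]
  have hS := (summable_wrd α hx0 hx1).sub (summable_wrd α hx'0 hx'1)
  rw [← Summable.tsum_sub (summable_wrd α hx0 hx1) (summable_wrd α hx'0 hx'1)]
  have h0 : ((wrd α 0 : ℤ) : ℝ) * x ^ (0 + 1) - ((wrd α 0 : ℤ) : ℝ) * x' ^ (0 + 1)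
      ≤ ∑' n : ℕ, (((wrd α n : ℤ) : ℝ) * x ^ (n + 1) - ((wrd α n : ℤ) : ℝ) * x' ^ (n + 1)) := by
    apply Summable.le_tsum hS 0
    intro j _
    have hw : (0 : ℝ) ≤ ((wrd α j : ℤ) : ℝ) := by exact_mod_cast wrd_nonneg hα.le j
    have hp : x' ^ (j + 1) ≤ x ^ (j + 1) := pow_le_pow_left₀ hx'0 hxx (j + 1)
    nlinarith
  refine le_trans ?_ h0
  rw [wrd_zero]
  have hc : (1 : ℝ) ≤ ((⌈α⌉ : ℤ) : ℝ) := by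
    have : (1 : ℤ) ≤ ⌈α⌉ := by exact_mod_cast Int.ceil_pos.2 hα
    exact_mod_cast this
  have : x ^ (0 + 1) - x' ^ (0 + 1) = x - x' := by ring
  nlinarith [sub_nonneg.2 hxx]

/-- `ceilG` is monotone in `α`. -/
lemma ceilG_mono {α α' x : ℝ} (h : α ≤ α') (hx0 : 0 ≤ x) (hx1 : x < 1) :
    ceilG α x ≤ ceilG α' x := by
  apply Summable.tsum_le_tsum _ (summable_ceilG α hx0 hx1) (summable_ceilG α' hx0 hx1)
  intro N
  have hc : (⌈α * (N : ℝ)⌉ : ℤ) ≤ ⌈α' * (N : ℝ)⌉ :=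
    Int.ceil_le_ceil (by nlinarith [Nat.cast_nonneg (α := ℝ) N])
  have : ((⌈α * (N : ℝ)⌉ : ℤ) : ℝ) ≤ ((⌈α' * (N : ℝ)⌉ : ℤ) : ℝ) := by exact_mod_cast hc
  nlinarith [pow_nonneg hx0 N]

/-- Monotonicity of the root: larger slope gives smaller `x`. -/
lemma x_antitone {α α' x x' : ℝ} (hα : 0 < α) (h : α ≤ α')
    (hx0 : 0 < x) (hx1 : x < 1) (hx'0 : 0 < x') (hx'1 : x' < 1)
    (heq : (1 - x) * ceilG α x = 1) (heq' : (1 - x') * ceilG α' x' = 1) :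
    x' ≤ x := by
  by_contra hcon
  push_neg at hcon
  have hα' : 0 < α' := lt_of_lt_of_le hα h
  have h1 := hdiff hα' hx0.le hcon.le hx'1
  have h2 : (1 - x) * ceilG α x ≤ (1 - x) * ceilG α' x := by
    have := ceilG_mono h hx0.le hx1
    nlinarith
  rw [heq] at h2
  rw [heq'] at h1
  nlinarith

/-- Crude upper bound: `x ≤ (1+α)⁻¹`. -/
lemma x_le_crude {α x : ℝ} (hα : 0 < α) (hx0 : 0 < x) (hx1 : x < 1)
    (heq : (1 - x) * ceilG α x = 1) : x ≤ (1 + α)⁻¹ := by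
  have hn : ‖x‖ < 1 := by rw [Real.norm_eq_abs, abs_of_nonneg hx0.le]; exact hx1
  have hsum : Summable (fun N : ℕ => α * (N : ℝ) * x ^ N) := by
    have := summable_pow_mul_geometric_of_norm_lt_one (R := ℝ) 1 (r := x) hn
    exact (this.mul_left α).congr fun N => by simp; ring
  have hle : ∑' N : ℕ, α * (N : ℝ) * x ^ N ≤ ceilG α x := by
    apply Summable.tsum_le_tsum _ hsum (summable_ceilG α hx0.le hx1)
    intro N
    have := Int.le_ceil (α * (N : ℝ))
    nlinarith [pow_nonneg hx0.le N]
  have he : ∑' N : ℕ, α * (N : ℝ) * x ^ N = α * (x / (1 - x) ^ 2) := by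
    rw [show (fun N : ℕ => α * (N : ℝ) * x ^ N) = (fun N : ℕ => α * ((N : ℝ) * x ^ N)) by
      ext N; ring, tsum_mul_left, tsum_coe_mul_geometric_of_norm_lt_one hn]
  rw [he] at hle
  have hx1' : (0:ℝ) < 1 - x := by linarith
  have h2 : (1 - x) * (α * (x / (1 - x) ^ 2)) ≤ (1 - x) * ceilG α x := by nlinarith
  rw [heq] at h2
  have h3 : (1 - x) * (α * (x / (1 - x) ^ 2)) = α * x / (1 - x) := by field_simp
  rw [h3] at h2
  have h4 : α * x ≤ 1 - x := by
    rw [div_le_one hx1'] at h2; linarith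
  rw [inv_eq_one_div, le_div_iff₀ (by linarith : (0:ℝ) < 1 + α)]
  nlinarith

/-- If the ceilings of multiples agree up to `M`, the difference of the `ceilG` sums is a tail. -/
lemma ceilG_close {α α' x X : ℝ} {M : ℕ} (hd : |α - α'| ≤ 1)
    (hx0 : 0 ≤ x) (hxX : x ≤ X) (hX : X < 1)
    (hagree : ∀ N : ℕ, N ≤ M → ⌈α * (N : ℝ)⌉ = ⌈α' * (N : ℝ)⌉) :
    |ceilG α' x - ceilG α x| ≤ ((M : ℝ) + 2) * X ^ (M + 1) * ((1 - X)⁻¹ ^ 2) := by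
  have hx1 : x < 1 := lt_of_le_of_lt hxX hX
  set d : ℕ → ℝ := fun N => ((⌈α' * (N : ℝ)⌉ : ℝ) - (⌈α * (N : ℝ)⌉ : ℝ)) * x ^ N with hdd
  have hsd : Summable d := by
    have := (summable_ceilG α' hx0 hx1).sub (summable_ceilG α hx0 hx1)
    exact this.congr fun N => by simp [hdd]; ring
  have htsum : ceilG α' x - ceilG α x = ∑' N, d N := by
    rw [ceilG, ceilG, ← Summable.tsum_sub (summable_ceilG α' hx0 hx1) (summable_ceilG α hx0 hx1)]
    congr 1; ext N; simp [hdd]; ring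
  -- split off the first M+1 terms, which vanish
  have hsplit : ∑' N, d N = ∑' K : ℕ, d (K + (M + 1)) := by
    have := Summable.sum_add_tsum_nat_add (f := d) (M + 1) hsd
    have hzero : ∑ i ∈ Finset.range (M + 1), d i = 0 := by
      apply Finset.sum_eq_zero
      intro i hi
      have : ⌈α * (i : ℝ)⌉ = ⌈α' * (i : ℝ)⌉ := hagree i (by
        have := Finset.mem_range.1 hi; omega)
      simp [hdd, this]
    linarith [this]
  -- bound the tail
  have hb : ∀ K : ℕ, |d (K + (M + 1))|
      ≤ (((M : ℝ) + 2) * X ^ (M + 1)) * (((K : ℝ) + 1) * X ^ K) := by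
    intro K
    have hN : ((K + (M + 1) : ℕ) : ℝ) = (K : ℝ) + (M : ℝ) + 1 := by push_cast; ring
    have h1 : |(⌈α' * ((K + (M + 1) : ℕ) : ℝ)⌉ : ℝ) - (⌈α * ((K + (M + 1) : ℕ) : ℝ)⌉ : ℝ)|
        ≤ ((K : ℝ) + (M : ℝ) + 1) + 1 := by
      refine le_trans (abs_ceil_sub_ceil _ _) ?_
      have : |α' * ((K + (M + 1) : ℕ) : ℝ) - α * ((K + (M + 1) : ℕ) : ℝ)|
          = |α' - α| * ((K : ℝ) + (M : ℝ) + 1) := by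
        rw [← abs_of_nonneg (by positivity : (0:ℝ) ≤ (K : ℝ) + (M : ℝ) + 1), ← abs_mul, hN]
        ring_nf
      rw [this]
      have hd' : |α' - α| ≤ 1 := by rwa [abs_sub_comm] at hd
      nlinarith [abs_nonneg (α' - α), (by positivity : (0:ℝ) ≤ (K : ℝ) + (M : ℝ) + 1)]
    have hxp : (0:ℝ) ≤ x ^ (K + (M + 1)) := pow_nonneg hx0 _
    have h2 : |d (K + (M + 1))| ≤ (((K : ℝ) + (M : ℝ) + 1) + 1) * x ^ (K + (M + 1)) := by
      rw [hdd]
      simp only [abs_mul, abs_of_nonneg hxp]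
      exact mul_le_mul_of_nonneg_right h1 hxp
    refine le_trans h2 ?_
    have hxX' : x ^ (K + (M + 1)) ≤ X ^ (K + (M + 1)) := pow_le_pow_left₀ hx0 hxX _
    have hXp : (0:ℝ) ≤ X := le_trans hx0 hxX
    have hfac : (((K : ℝ) + (M : ℝ) + 1) + 1) ≤ ((M : ℝ) + 2) * ((K : ℝ) + 1) := by
      nlinarith [Nat.cast_nonneg (α := ℝ) K, Nat.cast_nonneg (α := ℝ) M]
    have hXsplit : X ^ (K + (M + 1)) = X ^ (M + 1) * X ^ K := by
      rw [← pow_add]; ring_nf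
    calc (((K : ℝ) + (M : ℝ) + 1) + 1) * x ^ (K + (M + 1))
        ≤ (((K : ℝ) + (M : ℝ) + 1) + 1) * X ^ (K + (M + 1)) := by
          apply mul_le_mul_of_nonneg_left hxX' (by positivity)
      _ ≤ ((M : ℝ) + 2) * ((K : ℝ) + 1) * X ^ (K + (M + 1)) := by
          apply mul_le_mul_of_nonneg_right hfac (pow_nonneg hXp _)
      _ = (((M : ℝ) + 2) * X ^ (M + 1)) * (((K : ℝ) + 1) * X ^ K) := by
          rw [hXsplit]; ring
  have hXp : (0:ℝ) ≤ X := le_trans hx0 hxX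
  have hg : Summable (fun K : ℕ => (((M : ℝ) + 2) * X ^ (M + 1)) * (((K : ℝ) + 1) * X ^ K)) :=
    (summable_add_one_mul_geom hXp hX).mul_left _
  have habs : Summable (fun K : ℕ => |d (K + (M + 1))|) :=
    Summable.of_nonneg_of_le (fun K => abs_nonneg _) hb hg
  have htri : |∑' K : ℕ, d (K + (M + 1))| ≤ ∑' K : ℕ, |d (K + (M + 1))| := by
    simpa [Real.norm_eq_abs] using
      norm_tsum_le_tsum_norm (f := fun K : ℕ => d (K + (M + 1)))
        (by simpa [Real.norm_eq_abs] using habs)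
  have hsum2 : ∑' K : ℕ, |d (K + (M + 1))|
      ≤ ∑' K : ℕ, (((M : ℝ) + 2) * X ^ (M + 1)) * (((K : ℝ) + 1) * X ^ K) :=
    Summable.tsum_le_tsum hb habs hg
  have hval : ∑' K : ℕ, (((M : ℝ) + 2) * X ^ (M + 1)) * (((K : ℝ) + 1) * X ^ K)
      = (((M : ℝ) + 2) * X ^ (M + 1)) * ((1 - X)⁻¹ ^ 2) := by
    rw [tsum_mul_left, tsum_add_one_mul_geom hXp hX]
  rw [htsum, hsplit]
  calc |∑' K : ℕ, d (K + (M + 1))| ≤ ∑' K : ℕ, |d (K + (M + 1))| := htri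
    _ ≤ ∑' K : ℕ, (((M : ℝ) + 2) * X ^ (M + 1)) * (((K : ℝ) + 1) * X ^ K) := hsum2
    _ = ((M : ℝ) + 2) * X ^ (M + 1) * ((1 - X)⁻¹ ^ 2) := hval

lemma key_onesided {α α' x x' X : ℝ} {M : ℕ} (hα : 0 < α) (hα' : 0 < α')
    (hd : |α - α'| ≤ 1) (hx'0 : 0 < x') (hxx : x' ≤ x) (hxX : x ≤ X) (hX : X < 1)
    (heq : (1 - x) * ceilG α x = 1) (heq' : (1 - x') * ceilG α' x' = 1)
    (hagree : ∀ N : ℕ, N ≤ M → ⌈α * (N : ℝ)⌉ = ⌈α' * (N : ℝ)⌉) :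
    x - x' ≤ ((M : ℝ) + 2) * X ^ (M + 1) * ((1 - X)⁻¹ ^ 2) := by
  have hx1 : x < 1 := lt_of_le_of_lt hxX hX
  have h1 : x - x' ≤ (1 - x) * ceilG α' x - (1 - x') * ceilG α' x' :=
    hdiff hα' hx'0.le hxx hx1
  rw [heq'] at h1
  have h2 : (1 - x) * ceilG α' x - 1 = (1 - x) * (ceilG α' x - ceilG α x) := by
    have hr : (1 - x) * (ceilG α' x - ceilG α x)
        = (1 - x) * ceilG α' x - (1 - x) * ceilG α x := by ring
    rw [hr, heq]
  rw [h2] at h1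
  have h3 : (1 - x) * (ceilG α' x - ceilG α x) ≤ |ceilG α' x - ceilG α x| := by
    have h1x : 0 ≤ 1 - x := by linarith
    have := le_abs_self (ceilG α' x - ceilG α x)
    nlinarith [abs_nonneg (ceilG α' x - ceilG α x)]
  exact le_trans h1 (le_trans h3 (ceilG_close hd (le_trans hx'0.le hxx) hxX hX hagree))

lemma key_est {α α' x x' X : ℝ} {M : ℕ} (hα : 0 < α) (hα' : 0 < α')
    (hd : |α - α'| ≤ 1) (hx0 : 0 < x) (hx'0 : 0 < x') (hxX : x ≤ X) (hx'X : x' ≤ X)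
    (hX : X < 1)
    (heq : (1 - x) * ceilG α x = 1) (heq' : (1 - x') * ceilG α' x' = 1)
    (hagree : ∀ N : ℕ, N ≤ M → ⌈α * (N : ℝ)⌉ = ⌈α' * (N : ℝ)⌉) :
    |x - x'| ≤ ((M : ℝ) + 2) * X ^ (M + 1) * ((1 - X)⁻¹ ^ 2) := by
  rcases le_total x' x with hc | hc
  · rw [abs_of_nonneg (by linarith)]
    exact key_onesided hα hα' hd hx'0 hc hxX hX heq heq' hagree
  · rw [abs_of_nonpos (by linarith)]
    have hagree' : ∀ N : ℕ, N ≤ M → ⌈α' * (N : ℝ)⌉ = ⌈α * (N : ℝ)⌉ :=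
      fun N hN => (hagree N hN).symm
    have := key_onesided hα' hα (by rwa [abs_sub_comm] at hd) hx0 hc hx'X hX heq' heq hagree'
    linarith

lemma ceil_agree {y a : ℝ} (hy : Irrational y) (h : |a - y| < |y - (round y : ℤ)|) :
    ⌈a⌉ = ⌈y⌉ := by
  have hmin : |y - (round y : ℤ)| = min (Int.fract y) (1 - Int.fract y) :=
    abs_sub_round_eq_min y
  have hfl : ((⌊y⌋ : ℤ) : ℝ) < y := by
    rcases lt_or_eq_of_le (Int.floor_le y) with h' | h'
    · exact h'
    · exact absurd h'.symm (hy.ne_int ⌊y⌋)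
  have hfd : Int.fract y = y - (⌊y⌋ : ℤ) := rfl
  have hfr0 : 0 < Int.fract y := by rw [hfd]; linarith
  have hfr1 : Int.fract y < 1 := Int.fract_lt_one y
  have hceil : ⌈y⌉ = ⌊y⌋ + 1 := by
    have h1 : ⌈y⌉ ≤ ⌊y⌋ + 1 := Int.ceil_le_floor_add_one y
    have h2 : (⌊y⌋ : ℝ) < (⌈y⌉ : ℝ) := lt_of_lt_of_le hfl (Int.le_ceil y)
    have h3 : ⌊y⌋ < ⌈y⌉ := by exact_mod_cast h2
    omega
  rw [Int.ceil_eq_iff]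
  · constructor
    · have hle : |y - (round y : ℤ)| ≤ Int.fract y := by rw [hmin]; exact min_le_left _ _
      have := abs_lt.1 h
      have hcr : ((⌈y⌉ : ℤ) : ℝ) = (⌊y⌋ : ℝ) + 1 := by exact_mod_cast hceil
      rw [hcr, hfd] at *
      linarith
    · have hle : |y - (round y : ℤ)| ≤ 1 - Int.fract y := by rw [hmin]; exact min_le_right _ _
      have := abs_lt.1 h
      have hcr : ((⌈y⌉ : ℤ) : ℝ) = (⌊y⌋ : ℝ) + 1 := by exact_mod_cast hceil
      rw [hcr, hfd] at *
      linarith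

lemma exists_lambda_c {α₀ Δα : ℝ} (h1 : 1 < Δα) (hirr : Irrational α₀)
    (hθ : irrationalityBase α₀ < ENNReal.ofReal Δα) :
    ∃ lam c₃ : ℝ, 1 < lam ∧ lam < Δα ∧ 0 < c₃ ∧
      ∀ q : ℕ, 1 ≤ q → c₃ * q / lam ^ q ≤ distNearestInt (q * α₀) := by
  obtain ⟨l, hl0, hlθ, hlΔ⟩ := ENNReal.lt_iff_exists_real_btwn.1 hθ
  have hlΔ' : l < Δα := (ENNReal.ofReal_lt_ofReal_iff (by linarith)).1 hlΔ
  set lam := max l ((1 + Δα) / 2) with hlam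
  have hlam1 : 1 < lam := lt_of_lt_of_le (by linarith) (le_max_right _ _)
  have hlamΔ : lam < Δα := max_lt hlΔ' (by linarith)
  -- liminf for lam is not 0
  have hnot : liminf (fun q : ℕ =>
      ((lam ^ q * distNearestInt (q * α₀) / q : ℝ) : EReal)) atTop ≠ 0 := by
    intro h0
    have hmem : ENNReal.ofReal lam ∈ ENNReal.ofReal ''
        {l : ℝ | 1 ≤ l ∧
          liminf (fun q : ℕ =>
            ((l ^ q * distNearestInt (q * α₀) / q : ℝ) : EReal)) atTop = 0} :=
      ⟨lam, ⟨hlam1.le, h0⟩, rfl⟩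
    have hle : ENNReal.ofReal lam ≤ irrationalityBase α₀ := le_sSup hmem
    have : ENNReal.ofReal l ≤ ENNReal.ofReal lam :=
      ENNReal.ofReal_le_ofReal (le_max_left _ _)
    exact absurd (lt_of_lt_of_le hlθ (this.trans hle)) (lt_irrefl _)
  set v : ℕ → EReal := fun q : ℕ => ((lam ^ q * distNearestInt (q * α₀) / q : ℝ) : EReal)
    with hv
  have hge0 : (0 : EReal) ≤ liminf v atTop := by
    refine le_liminf_of_le (by isBoundedDefault) (Eventually.of_forall fun q => ?_)
    have h0 : (0:ℝ) ≤ lam ^ q * distNearestInt (q * α₀) / q := by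
      apply div_nonneg _ (Nat.cast_nonneg q)
      exact mul_nonneg (pow_nonneg (by linarith) q) (abs_nonneg _)
    have : (0 : EReal) ≤ ((lam ^ q * distNearestInt (↑q * α₀) / ↑q : ℝ) : EReal) :=
      EReal.coe_nonneg.2 h0
    exact this
  have hpos : (0 : EReal) < liminf v atTop := lt_of_le_of_ne hge0 (Ne.symm hnot)
  obtain ⟨c, hc0, hcL⟩ := EReal.exists_between_coe_real hpos
  have hc0' : (0:ℝ) < c := by exact_mod_cast hc0
  have hev : ∀ᶠ q in atTop, (c : EReal) < v q := eventually_lt_of_lt_liminf hcL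
  obtain ⟨Q, hQ⟩ := eventually_atTop.1 hev
  set w : ℕ → ℝ := fun q => distNearestInt (q * α₀) * lam ^ q / q with hw
  have hwpos : ∀ q : ℕ, 1 ≤ q → 0 < w q := by
    intro q hq
    have hirr' : Irrational ((q : ℝ) * α₀) := hirr.natCast_mul (by omega)
    have hdn : 0 < distNearestInt ((q:ℝ) * α₀) := by
      rw [distNearestInt, abs_pos, sub_ne_zero]
      exact hirr'.ne_int _
    have : (0:ℝ) < q := by exact_mod_cast hq
    apply div_pos (mul_pos hdn (pow_pos (by linarith) q)) this
  have hne : (Finset.Icc 1 (Q + 1)).Nonempty := ⟨1, by simp⟩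
  set T := (Finset.Icc 1 (Q + 1)).inf' hne w with hT
  have hTpos : 0 < T := by
    rw [hT, Finset.lt_inf'_iff]
    intro i hi
    exact hwpos i (Finset.mem_Icc.1 hi).1
  refine ⟨lam, min c T, hlam1, hlamΔ, lt_min hc0' hTpos, ?_⟩
  intro q hq
  have hq0 : (0:ℝ) < q := by exact_mod_cast hq
  have hlq : (0:ℝ) < lam ^ q := pow_pos (by linarith) q
  have hcw : min c T ≤ w q := by
    rcases le_or_gt q (Q + 1) with hcase | hcase
    · exact le_trans (min_le_right _ _)
        (Finset.inf'_le w (Finset.mem_Icc.2 ⟨hq, hcase⟩))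
    · have hQq : Q ≤ q := by omega
      have := hQ q hQq
      have hreal : c < lam ^ q * distNearestInt (q * α₀) / q := by
        have h' : ((c:ℝ) : EReal) < ((lam ^ q * distNearestInt (↑q * α₀) / ↑q : ℝ) : EReal) := this
        exact_mod_cast h'
      have : c < w q := by rw [hw]; simpa [mul_comm] using hreal
      exact le_trans (min_le_left _ _) this.le
  rw [div_le_iff₀ hlq]
  rw [hw] at hcw
  have := (le_div_iff₀ hq0).1 hcw
  nlinarith

lemma tendsto_add_one_mul_geom {r : ℝ} (hr0 : 0 ≤ r) (hr1 : r < 1) :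
    Tendsto (fun M : ℕ => ((M : ℝ) + 1) * r ^ M) atTop (nhds 0) :=
  (summable_add_one_mul_geom hr0 hr1).tendsto_atTop_zero

set_option maxHeartbeats 2000000 in
/-- If `α₀ > 0` is irrational and `θ(α₀) < Δ(α₀)`, then `Δ′(α₀) = 0`. -/
theorem devilStaircase_deriv_zero (Δ : ℝ → ℝ) (hΔ : IsDevilStaircase Δ)
    (α₀ : ℝ) (h0 : 0 < α₀) (hirr : Irrational α₀)
    (hθ : irrationalityBase α₀ < ENNReal.ofReal (Δ α₀)) :
    HasDerivAt Δ 0 α₀ := by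
  classical
  set xf : ℝ → ℝ := fun α => (Δ α)⁻¹ with hxf
  have hE : ∀ α : ℝ, 0 < α →
      (0 < xf α ∧ xf α < 1) ∧ (1 - xf α) * ceilG α (xf α) = 1 := by
    intro α hα
    obtain ⟨⟨h1, h2⟩, _⟩ := hΔ.2 α hα
    have hΔpos : 0 < Δ α := by linarith
    have hx0 : 0 < xf α := inv_pos.2 hΔpos
    have hx1 : xf α < 1 := by
      rw [hxf]; exact inv_lt_one_of_one_lt₀ h1
    refine ⟨⟨hx0, hx1⟩, ?_⟩
    rw [← tsum_wrd α hx0.le hx1, ← h2]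
    congr 1; ext n
    rw [upperWord_eq_wrd, div_eq_mul_inv, ← inv_pow]
  obtain ⟨⟨hx₀0, hx₀1⟩, heq₀⟩ := hE α₀ h0
  have hΔ1 : 1 < Δ α₀ := (hΔ.2 α₀ h0).1.1
  obtain ⟨lam, c₃, hlam1, hlamΔ, hc₃, hdnn⟩ := exists_lambda_c hΔ1 hirr hθ
  have hlam0 : (0:ℝ) < lam := by linarith
  -- agreement machinery
  have hagree_of : ∀ (a : ℝ) (P : ℕ),
      (∀ N : ℕ, 1 ≤ N → N ≤ P → (N : ℝ) * |a - α₀| < distNearestInt ((N : ℝ) * α₀)) →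
      ∀ N : ℕ, N ≤ P → ⌈a * (N : ℝ)⌉ = ⌈α₀ * (N : ℝ)⌉ := by
    intro a P h N hNP
    rcases Nat.eq_zero_or_pos N with h0' | h1'
    · subst h0'; norm_num
    · apply ceil_agree
      · have : Irrational ((N : ℝ) * α₀) := hirr.natCast_mul (by omega)
        rwa [mul_comm] at this
      · have hd := h N h1' hNP
        rw [distNearestInt, mul_comm (N:ℝ) α₀] at hd
        have : |a * (N:ℝ) - α₀ * (N:ℝ)| = (N:ℝ) * |a - α₀| := by
          rw [show a * (N:ℝ) - α₀ * (N:ℝ) = (a - α₀) * (N:ℝ) by ring, abs_mul,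
            abs_of_nonneg (Nat.cast_nonneg (α := ℝ) N)]
          ring
        rw [this]
        exact hd
  -- Stage 1 : find lo < α₀ with xf lo < lam⁻¹
  set lo₀ : ℝ := max (α₀ / 2) (α₀ - 1 / 2) with hlo₀
  have hlo₀pos : 0 < lo₀ := lt_of_lt_of_le (by linarith) (le_max_left _ _)
  have hlo₀lt : lo₀ < α₀ := max_lt (by linarith) (by linarith)
  set Xb : ℝ := (1 + lo₀)⁻¹ with hXb
  have hXb1 : Xb < 1 := by
    rw [hXb, inv_lt_one_iff₀]; right; linarith
  have hXb0 : 0 < Xb := by rw [hXb]; positivity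
  have hxcrude : ∀ a : ℝ, lo₀ ≤ a → 0 < a → xf a ≤ Xb := by
    intro a ha ha0
    obtain ⟨⟨p1, p2⟩, p3⟩ := hE a ha0
    refine le_trans (x_le_crude ha0 p1 p2 p3) ?_
    rw [hXb]
    apply inv_anti₀ (by linarith) (by linarith)
  have hεpos : 0 < lam⁻¹ - xf α₀ := by
    have h1 : xf α₀ = (Δ α₀)⁻¹ := rfl
    have : (Δ α₀)⁻¹ < lam⁻¹ := by
      apply inv_strictAnti₀ hlam0 hlamΔ
    linarith
  -- choose M₀ for stage 1
  have htend1 : Tendsto (fun M : ℕ => ((M : ℝ) + 2) * Xb ^ (M + 1) * ((1 - Xb)⁻¹ ^ 2))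
      atTop (nhds 0) := by
    have hcomp := (tendsto_add_one_mul_geom hXb0.le hXb1).comp
      (tendsto_add_atTop_nat 1)
    have h2 : Tendsto (fun M : ℕ => ((((M + 1 : ℕ) : ℝ)) + 1) * Xb ^ (M + 1)
        * ((1 - Xb)⁻¹ ^ 2)) atTop (nhds 0) := by
      have h3 := hcomp.mul_const ((1 - Xb)⁻¹ ^ 2)
      rw [zero_mul] at h3
      exact h3
    exact h2.congr fun M => by push_cast; ring
  obtain ⟨M₀, hM₀⟩ := eventually_atTop.1
    (htend1.eventually_lt_const hεpos)
  -- define lo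
  set δ₁ : ℝ := c₃ / lam ^ (M₀ + 1) with hδ₁
  have hδ₁pos : 0 < δ₁ := div_pos hc₃ (pow_pos hlam0 _)
  set lo : ℝ := max lo₀ (α₀ - δ₁ / 2) with hlo
  have hlopos : 0 < lo := lt_of_lt_of_le hlo₀pos (le_max_left _ _)
  have hlolt : lo < α₀ := max_lt hlo₀lt (by linarith)
  have hlo_ge : lo₀ ≤ lo := le_max_left _ _
  have hlo_close : α₀ - lo ≤ δ₁ / 2 := by
    have := le_max_right lo₀ (α₀ - δ₁ / 2)
    rw [hlo]; linarith [le_max_right lo₀ (α₀ - δ₁ / 2)]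
  obtain ⟨⟨hxlo0, hxlo1⟩, heqlo⟩ := hE lo hlopos
  -- agreement between lo and α₀ up to M₀
  have hag1 : ∀ N : ℕ, N ≤ M₀ → ⌈lo * (N : ℝ)⌉ = ⌈α₀ * (N : ℝ)⌉ := by
    apply hagree_of
    intro N h1N hNM
    have hdl : |lo - α₀| = α₀ - lo := by rw [abs_sub_comm, abs_of_nonneg (by linarith)]
    have hN0 : (0:ℝ) < N := by exact_mod_cast h1N
    have hbound := hdnn N h1N
    have hpowlt : lam ^ N < 2 * lam ^ (M₀ + 1) := by
      have h1 : lam ^ N ≤ lam ^ (M₀ + 1) := by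
        apply pow_le_pow_right₀ hlam1.le; omega
      nlinarith [pow_pos hlam0 (M₀ + 1)]
    have hstep : (N:ℝ) * (α₀ - lo) < c₃ * N / lam ^ N := by
      have h2 : α₀ - lo ≤ δ₁ / 2 := hlo_close
      have h3 : δ₁ / 2 < c₃ / lam ^ N := by
        rw [hδ₁, div_div]
        apply div_lt_div_of_pos_left hc₃ (pow_pos hlam0 N)
        · nlinarith [pow_pos hlam0 (M₀ + 1)]
      have h4 : α₀ - lo < c₃ / lam ^ N := lt_of_le_of_lt h2 h3
      calc (N:ℝ) * (α₀ - lo) < (N:ℝ) * (c₃ / lam ^ N) := by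
            apply mul_lt_mul_of_pos_left h4 hN0
        _ = c₃ * N / lam ^ N := by ring
    rw [hdl]
    exact lt_of_lt_of_le hstep hbound
  have hstage1 : xf lo < lam⁻¹ := by
    have hkey := key_est hlopos h0 (by
        rw [abs_sub_comm, abs_of_nonneg (by linarith : (0:ℝ) ≤ α₀ - lo)]
        have : lo₀ ≤ lo := hlo_ge
        have : α₀ - 1/2 ≤ lo₀ := le_max_right _ _
        linarith)
      hxlo0 hx₀0 (hxcrude lo hlo_ge hlopos) (hxcrude α₀ (le_of_lt hlo₀lt) h0) hXb1
      heqlo heq₀ hag1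
    have := hM₀ M₀ le_rfl
    have habs := abs_sub_abs_le_abs_sub (xf lo) (xf α₀)
    have h5 : xf lo - xf α₀ ≤ |xf lo - xf α₀| := le_abs_self _
    linarith
  -- Stage 2
  set X : ℝ := xf lo with hX
  have hX0 : 0 < X := hxlo0
  have hX1 : X < 1 := hxlo1
  have hXlam : X * lam < 1 := by
    calc X * lam < lam⁻¹ * lam := by exact mul_lt_mul_of_pos_right hstage1 hlam0
      _ = 1 := inv_mul_cancel₀ (ne_of_gt hlam0)
  set hi : ℝ := α₀ + 1 / 2 with hhi
  have hhipos : 0 < hi := by rw [hhi]; linarith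
  obtain ⟨⟨hxhi0, hxhi1⟩, heqhi⟩ := hE hi hhipos
  have hxge : ∀ a : ℝ, 0 < a → a ≤ hi → xf hi ≤ xf a := by
    intro a ha hahi
    obtain ⟨⟨p1, p2⟩, p3⟩ := hE a ha
    exact x_antitone ha hahi p1 p2 hxhi0 hxhi1 p3 heqhi
  have hxle : ∀ a : ℝ, lo ≤ a → xf a ≤ X := by
    intro a ha
    have ha0 : 0 < a := lt_of_lt_of_le hlopos ha
    obtain ⟨⟨p1, p2⟩, p3⟩ := hE a ha0
    exact x_antitone hlopos ha hxlo0 hxlo1 p1 p2 heqlo p3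
  set C : ℝ := ((xf hi)⁻¹) ^ 2 with hC
  have hCpos : 0 < C := by rw [hC]; positivity
  have h1X : 0 < 1 - X := by linarith
  set K : ℝ := C * ((1 - X)⁻¹ ^ 2) * lam / c₃ with hK
  rw [hasDerivAt_iff_tendsto_slope, Metric.tendsto_nhdsWithin_nhds]
  intro ε hε
  have htend2 : Tendsto (fun M : ℕ => K * (((M : ℝ) + 1) * (X * lam) ^ M))
      atTop (nhds 0) := by
    have h3 := (tendsto_add_one_mul_geom (mul_nonneg hX0.le hlam0.le) hXlam).const_mul K
    rw [mul_zero] at h3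
    exact h3
  obtain ⟨M₁, hM₁⟩ := eventually_atTop.1 (htend2.eventually_lt_const hε)
  set M₂ : ℕ := max M₁ 1 with hM₂
  set δ : ℝ := min (c₃ / lam ^ M₂) (min (1 / 2) (α₀ - lo)) with hδ
  have hδpos : 0 < δ := lt_min (div_pos hc₃ (pow_pos hlam0 _))
    (lt_min (by norm_num) (by linarith))
  refine ⟨δ, hδpos, ?_⟩
  intro a ha hdist
  have hane : a ≠ α₀ := ha
  rw [Real.dist_eq] at hdist
  set dδ : ℝ := |a - α₀| with hdδ
  have hdδpos : 0 < dδ := abs_pos.2 (sub_ne_zero.2 hane)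
  have hdlt1 : dδ < α₀ - lo :=
    lt_of_lt_of_le hdist (le_trans (min_le_right _ _) (min_le_right _ _))
  have hdlt2 : dδ < 1 / 2 :=
    lt_of_lt_of_le hdist (le_trans (min_le_right _ _) (min_le_left _ _))
  have hdlt3 : dδ < c₃ / lam ^ M₂ := lt_of_lt_of_le hdist (min_le_left _ _)
  have habs' := abs_lt.1 (show |a - α₀| < α₀ - lo from hdlt1)
  have halo : lo < a := by linarith [habs'.1]
  have hahi : a < hi := by
    have := abs_lt.1 (show |a - α₀| < 1 / 2 from hdlt2)
    rw [hhi]; linarith [this.2]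
  have ha0 : 0 < a := lt_trans hlopos halo
  obtain ⟨⟨hxa0, hxa1⟩, heqa⟩ := hE a ha0
  have hloglam : 0 < Real.log lam := Real.log_pos hlam1
  have hcdpos : 0 < c₃ / dδ := div_pos hc₃ hdδpos
  set t : ℝ := Real.log (c₃ / dδ) / Real.log lam with ht
  set M : ℕ := ⌊t⌋₊ with hM
  have hcd : lam ^ M₂ < c₃ / dδ := by
    rw [lt_div_iff₀ hdδpos]
    rw [lt_div_iff₀ (pow_pos hlam0 M₂)] at hdlt3
    rw [mul_comm]
    exact hdlt3
  have hMge : M₂ ≤ M := by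
    rw [hM]
    apply Nat.le_floor
    rw [ht, le_div_iff₀ hloglam]
    have h2 : Real.log (lam ^ M₂) ≤ Real.log (c₃ / dδ) :=
      Real.log_le_log (pow_pos hlam0 M₂) hcd.le
    rw [Real.log_pow] at h2
    exact_mod_cast h2
  have hM1le : 1 ≤ M := le_trans (le_max_right M₁ 1) hMge
  have ht0 : 0 ≤ t := by
    have : (0:ℝ) ≤ (M₂ : ℝ) := Nat.cast_nonneg _
    have h2 : Real.log (lam ^ M₂) ≤ Real.log (c₃ / dδ) :=
      Real.log_le_log (pow_pos hlam0 M₂) hcd.le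
    rw [Real.log_pow] at h2
    have h3 : (0:ℝ) ≤ Real.log (c₃ / dδ) := by
      have := mul_nonneg this hloglam.le
      linarith
    rw [ht]
    exact div_nonneg h3 hloglam.le
  have hMup : lam ^ M ≤ c₃ / dδ := by
    have h1 : (M : ℝ) ≤ t := Nat.floor_le ht0
    rw [ht, le_div_iff₀ hloglam] at h1
    have h2 : Real.log (lam ^ M) ≤ Real.log (c₃ / dδ) := by
      rw [Real.log_pow]; exact_mod_cast h1
    exact (Real.log_le_log_iff (pow_pos hlam0 M) hcdpos).1 h2
  have hMdown : c₃ / dδ < lam ^ (M + 1) := by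
    have h1 : t < (M : ℝ) + 1 := by exact_mod_cast Nat.lt_floor_add_one t
    rw [ht, div_lt_iff₀ hloglam] at h1
    have h2 : Real.log (c₃ / dδ) < Real.log (lam ^ (M + 1)) := by
      rw [Real.log_pow]; push_cast; linarith
    exact (Real.log_lt_log_iff hcdpos (pow_pos hlam0 _)).1 h2
  have hdlow : c₃ / lam ^ (M + 1) < dδ := by
    calc c₃ / lam ^ (M + 1) < c₃ / (c₃ / dδ) :=
          div_lt_div_of_pos_left hc₃ hcdpos hMdown
      _ = dδ := by field_simp
  -- agreement up to M - 1
  have hagA : ∀ N : ℕ, N ≤ M - 1 → ⌈a * (N : ℝ)⌉ = ⌈α₀ * (N : ℝ)⌉ := by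
    apply hagree_of
    intro N h1N hNM
    have hN0 : (0:ℝ) < N := by exact_mod_cast h1N
    have hb := hdnn N h1N
    have hlt : dδ < c₃ / lam ^ N := by
      have h2 : lam ^ N < lam ^ M := pow_lt_pow_right₀ hlam1 (by omega)
      have h3 : dδ ≤ c₃ / lam ^ M := by
        rw [le_div_iff₀ (pow_pos hlam0 M)]
        rw [le_div_iff₀ hdδpos] at hMup
        rw [mul_comm]
        exact hMup
      refine lt_of_le_of_lt h3 ?_
      exact div_lt_div_of_pos_left hc₃ (pow_pos hlam0 N) h2
    calc (N:ℝ) * dδ < (N:ℝ) * (c₃ / lam ^ N) := mul_lt_mul_of_pos_left hlt hN0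
      _ = c₃ * N / lam ^ N := by ring
      _ ≤ distNearestInt ((N:ℝ) * α₀) := hb
  have hkey := key_est (M := M - 1) ha0 h0
    (le_of_lt (lt_of_lt_of_le hdlt2 (by norm_num)))
    hxa0 hx₀0 (hxle a halo.le) (hxle α₀ hlolt.le) hX1 heqa heq₀ hagA
  have hcast : (((M - 1 : ℕ) : ℝ) + 2) = (M : ℝ) + 1 := by
    rw [Nat.cast_sub hM1le]; push_cast; ring
  have hpow : X ^ ((M - 1) + 1) = X ^ M := by rw [Nat.sub_add_cancel hM1le]
  rw [hcast, hpow] at hkey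
  -- slope bound
  have hΔa : Δ a = (xf a)⁻¹ := (inv_inv (Δ a)).symm
  have hΔα₀' : Δ α₀ = (xf α₀)⁻¹ := (inv_inv (Δ α₀)).symm
  have hgea : xf hi ≤ xf a := hxge a ha0 hahi.le
  have hge0' : xf hi ≤ xf α₀ := hxge α₀ h0 (by rw [hhi]; linarith)
  have hdiffΔ : |Δ a - Δ α₀| ≤ C * |xf a - xf α₀| := by
    have hexp : Δ a - Δ α₀ = (xf α₀ - xf a) / (xf a * xf α₀) := by
      rw [hΔa, hΔα₀']
      field_simp
    rw [hexp, abs_div, abs_of_pos (mul_pos hxa0 hx₀0)]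
    rw [div_eq_mul_inv, abs_sub_comm]
    rw [mul_comm C _]
    apply mul_le_mul_of_nonneg_left _ (abs_nonneg _)
    rw [hC, inv_pow]
    apply inv_anti₀ (by positivity)
    rw [pow_two]
    exact mul_le_mul hgea hge0' hxhi0.le hxa0.le
  set B : ℝ := ((M : ℝ) + 1) * X ^ M * ((1 - X)⁻¹ ^ 2) with hB
  have hBpos : 0 < B := by
    rw [hB]
    have : (0:ℝ) < (M:ℝ) + 1 := by positivity
    positivity
  have hslope : |Δ a - Δ α₀| / dδ < ε := by
    have hkey' : |xf a - xf α₀| ≤ B := hkey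
    have h6 : |Δ a - Δ α₀| / dδ ≤ C * B / dδ := by
      gcongr
      exact hdiffΔ.trans (mul_le_mul_of_nonneg_left hkey' hCpos.le)
    have h8 : c₃ < dδ * lam ^ (M + 1) := by
      have := hdlow
      rw [div_lt_iff₀ (pow_pos hlam0 (M + 1))] at this
      exact this
    have h7 : C * B / dδ < C * B * (lam ^ (M + 1) / c₃) := by
      rw [div_eq_mul_inv]
      apply mul_lt_mul_of_pos_left _ (mul_pos hCpos hBpos)
      rw [inv_eq_one_div, div_lt_div_iff₀ hdδpos hc₃, one_mul, mul_comm]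
      exact h8
    have h10 : C * B * (lam ^ (M + 1) / c₃) = K * (((M : ℝ) + 1) * (X * lam) ^ M) := by
      rw [hK, hB, mul_pow, pow_succ]
      field_simp
      ring
    have h11 := hM₁ M (le_trans (le_max_left M₁ 1) hMge)
    calc |Δ a - Δ α₀| / dδ ≤ C * B / dδ := h6
      _ < C * B * (lam ^ (M + 1) / c₃) := h7
      _ = K * (((M : ℝ) + 1) * (X * lam) ^ M) := h10
      _ < ε := h11
  rw [Real.dist_eq, sub_zero]
  have hsl : |slope Δ α₀ a| = |Δ a - Δ α₀| / dδ := by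
    rw [slope_def_field, abs_div, hdδ]
  rw [hsl]
  exact hslope
end
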